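/- arXiv:1112.3864 — 2 statements merged into one kernel-verified Lean document; each statement's English description precedes it below -/
import Mathlib

section
/- If A is an absolute retract in a congruence modular variety and Con(A) has finite height (is finite dimensional), then A is isomorphic to a finite product of subdirectly irreducible algebras. -/
/-- An algebraic signature: a type of operation symbols with finite arities. -/
structure Signature where
  ops : Type
  arity : ops → ℕ

/-- An algebra for a signature. -/
structure SAlgebra (S : Signature) where
  carrier : Type
  interp : (o : S.ops) → (Fin (S.arity o) → carrier) → carrier

namespace SAlgebra

variable {S : Signature}

/-- Binary product of algebras. -/
def prod (A B : SAlgebra S) : SAlgebra S where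
  carrier := A.carrier × B.carrier
  interp o x := (A.interp o fun i => (x i).1, B.interp o fun i => (x i).2)

/-- Product of a family of algebras. -/
def pi {ι : Type} (A : ι → SAlgebra S) : SAlgebra S where
  carrier := ∀ i, (A i).carrier
  interp o x i := (A i).interp o fun j => x j i

end SAlgebra

/-- Homomorphisms of algebras. -/
structure SHom {S : Signature} (A B : SAlgebra S) where
  toFun : A.carrier → B.carrier
  map : ∀ (o : S.ops) (x : Fin (S.arity o) → A.carrier),
    toFun (A.interp o x) = B.interp o fun i => toFun (x i)

namespace SHom

variable {S : Signature}

/-- Composition of homomorphisms. -/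
def comp {A B C : SAlgebra S} (g : SHom B C) (f : SHom A B) : SHom A C where
  toFun := g.toFun ∘ f.toFun
  map o x := by simp [Function.comp, f.map, g.map]

/-- The `i`-th projection of a product. -/
def proj {ι : Type} (A : ι → SAlgebra S) (i : ι) : SHom (SAlgebra.pi A) (A i) where
  toFun x := x i
  map _ _ := rfl

end SHom

/-- Congruences of an algebra. -/
structure SCon {S : Signature} (A : SAlgebra S) where
  r : A.carrier → A.carrier → Prop
  iseqv : Equivalence r
  compat : ∀ (o : S.ops) (x y : Fin (S.arity o) → A.carrier),
    (∀ i, r (x i) (y i)) → r (A.interp o x) (A.interp o y)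

namespace SCon

variable {S : Signature} {A : SAlgebra S}

instance : PartialOrder (SCon A) where
  le c d := ∀ x y, c.r x y → d.r x y
  le_refl _ _ _ h := h
  le_trans _ _ _ h h' x y hx := h' x y (h x y hx)
  le_antisymm a b h h' := by
    cases a; cases b
    have : ∀ x y : A.carrier, _ ↔ _ := fun x y => Iff.intro (h x y) (h' x y)
    simp only [SCon.mk.injEq]
    funext x y
    exact propext (this x y)

instance : InfSet (SCon A) :=
  ⟨fun s =>
    { r := fun x y => ∀ c ∈ s, c.r x y
      iseqv := ⟨fun x c _ => c.iseqv.refl x, fun h c hc => c.iseqv.symm (h c hc),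
        fun h1 h2 c hc => c.iseqv.trans (h1 c hc) (h2 c hc)⟩
      compat := fun o x y h c hc => c.compat o x y fun i => h i c hc }⟩

instance : CompleteLattice (SCon A) :=
  completeLatticeOfInf _ (fun s =>
    ⟨fun c hc x y h => h c hc, fun b hb x y h c hc => hb hc x y h⟩)

/-- Restriction (inverse image) of a congruence along a homomorphism. -/
def comap {B : SAlgebra S} (f : SHom A B) (θ : SCon B) : SCon A where
  r x y := θ.r (f.toFun x) (f.toFun y)
  iseqv := ⟨fun _ => θ.iseqv.refl _, θ.iseqv.symm, θ.iseqv.trans⟩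
  compat o x y h := by
    show θ.r (f.toFun (A.interp o x)) (f.toFun (A.interp o y))
    rw [f.map, f.map]
    exact θ.compat o _ _ h

/-- Product of two congruences. -/
def prodCon {A B : SAlgebra S} (φ : SCon A) (ψ : SCon B) : SCon (A.prod B) where
  r x y := φ.r x.1 y.1 ∧ ψ.r x.2 y.2
  iseqv := ⟨fun _ => ⟨φ.iseqv.refl _, ψ.iseqv.refl _⟩,
    fun h => ⟨φ.iseqv.symm h.1, ψ.iseqv.symm h.2⟩,
    fun h h' => ⟨φ.iseqv.trans h.1 h'.1, ψ.iseqv.trans h.2 h'.2⟩⟩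
  compat o x y h := ⟨φ.compat o _ _ fun i => (h i).1, ψ.compat o _ _ fun i => (h i).2⟩

/-- Product of a family of congruences. -/
def piCon {ι : Type} {A : ι → SAlgebra S} (φ : ∀ i, SCon (A i)) : SCon (SAlgebra.pi A) where
  r x y := ∀ i, (φ i).r (x i) (y i)
  iseqv := ⟨fun _ i => (φ i).iseqv.refl _, fun h i => (φ i).iseqv.symm (h i),
    fun h h' i => (φ i).iseqv.trans (h i) (h' i)⟩
  compat o x y h i := (φ i).compat o _ _ fun j => h j i

end SCon

/-- Terms in `n` variables over a signature. -/
inductive STerm (S : Signature) : ℕ → Type where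
  | var : {n : ℕ} → Fin n → STerm S n
  | app : {n : ℕ} → (o : S.ops) → (Fin (S.arity o) → STerm S n) → STerm S n

/-- Evaluation of a term in an algebra. -/
def STerm.eval {S : Signature} (A : SAlgebra S) {n : ℕ} : STerm S n → (Fin n → A.carrier) → A.carrier
  | .var i, x => x i
  | .app o t, x => A.interp o fun j => (t j).eval A x

/-- The term-condition centralizer relation `C(α, β; δ)`. -/
def Centralizes {S : Signature} (A : SAlgebra S) (α β δ : SCon A) : Prop :=
  ∀ (n m : ℕ) (t : STerm S (n + m)) (a b : Fin n → A.carrier) (u v : Fin m → A.carrier),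
    (∀ i, α.r (a i) (b i)) → (∀ j, β.r (u j) (v j)) →
    δ.r (t.eval A (Fin.append a u)) (t.eval A (Fin.append a v)) →
    δ.r (t.eval A (Fin.append b u)) (t.eval A (Fin.append b v))

/-- The commutator `[α, β]`: the least congruence `δ` with `C(α, β; δ)`. -/
def conCommutator {S : Signature} (A : SAlgebra S) (α β : SCon A) : SCon A :=
  sInf {δ | Centralizes A α β δ}

/-- The center of an algebra: the largest central congruence. -/
def conCenter {S : Signature} (A : SAlgebra S) : SCon A :=
  sSup {θ | conCommutator A θ ⊤ = ⊥}

/-- A class of algebras is a variety iff it is closed under subalgebras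
(isomorphic copies included), homomorphic images and products. -/
def IsVariety {S : Signature} (V : SAlgebra S → Prop) : Prop :=
  (∀ (A B : SAlgebra S) (e : SHom A B), Function.Injective e.toFun → V B → V A) ∧
  (∀ (A B : SAlgebra S) (p : SHom A B), Function.Surjective p.toFun → V A → V B) ∧
  (∀ (ι : Type) (A : ι → SAlgebra S), (∀ i, V (A i)) → V (SAlgebra.pi A))

/-- A congruence modular variety. -/
def IsCongruenceModularVariety {S : Signature} (V : SAlgebra S → Prop) : Prop :=
  IsVariety V ∧ ∀ A : SAlgebra S, V A → IsModularLattice (SCon A)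

/-- A Gumm difference term for the class `V`:  `d(x,y,y) = x` holds identically,
and `d(x,x,y) = y` whenever `x θ y` for an abelian congruence `θ`. -/
def IsGummDifferenceTerm {S : Signature} (V : SAlgebra S → Prop) (d : STerm S 3) : Prop :=
  (∀ A : SAlgebra S, V A → ∀ x y : A.carrier, d.eval A ![x, y, y] = x) ∧
  (∀ A : SAlgebra S, V A → ∀ θ : SCon A, conCommutator A θ θ = ⊥ →
    ∀ x y : A.carrier, θ.r x y → d.eval A ![x, x, y] = y)

/-- `R` is an absolute retract in `V`: every embedding of `R` into a member of `V`
admits a retraction. -/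
def IsAbsoluteRetract {S : Signature} (V : SAlgebra S → Prop) (R : SAlgebra S) : Prop :=
  ∀ A : SAlgebra S, V A → ∀ e : SHom R A, Function.Injective e.toFun →
    ∃ p : SHom A R, ∀ x, p.toFun (e.toFun x) = x

/-- An embedding is essential iff every congruence of the codomain restricting
trivially is trivial. -/
def IsEssential {S : Signature} {A B : SAlgebra S} (e : SHom A B) : Prop :=
  ∀ θ : SCon B, SCon.comap e θ = ⊥ → θ = ⊥

/-- A congruence `α` is dense: any congruence meeting it trivially is trivial. -/
def DenseCon {S : Signature} {A : SAlgebra S} (α : SCon A) : Prop :=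
  ∀ θ : SCon A, θ ⊓ α = ⊥ → θ = ⊥

/-- The setoid underlying a congruence. -/
def SCon.setoid {S : Signature} {A : SAlgebra S} (θ : SCon A) : Setoid A.carrier :=
  ⟨θ.r, θ.iseqv⟩

/-- Quotient algebra. -/
noncomputable def SAlgebra.quot {S : Signature} (A : SAlgebra S) (θ : SCon A) : SAlgebra S where
  carrier := Quotient θ.setoid
  interp o x := Quotient.mk θ.setoid (A.interp o fun i => (x i).out)

theorem SCon.out_rel {S : Signature} {A : SAlgebra S} (θ : SCon A) (a : A.carrier) :
    θ.r (Quotient.out (Quotient.mk θ.setoid a)) a :=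
  @Quotient.exact _ θ.setoid _ _ (Quotient.out_eq _)

/-- The canonical quotient homomorphism. -/
def SHom.quotHom {S : Signature} (A : SAlgebra S) (θ : SCon A) : SHom A (A.quot θ) where
  toFun := Quotient.mk θ.setoid
  map o x := Quotient.sound (θ.compat o _ _ fun i => θ.iseqv.symm (θ.out_rel (x i)))

/-- Product map of a family of homomorphisms. -/
def SHom.piMap {S : Signature} {ι : Type} {A B : ι → SAlgebra S} (f : ∀ i, SHom (A i) (B i)) :
    SHom (SAlgebra.pi A) (SAlgebra.pi B) where
  toFun x i := (f i).toFun (x i)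
  map o x := funext fun i => (f i).map o fun j => x j i

/-- The congruence `φ/θ` on the quotient `A/θ`, for `θ ≤ φ`. -/
def SCon.quotCon {S : Signature} {A : SAlgebra S} (θ φ : SCon A) (h : θ ≤ φ) :
    SCon (A.quot θ) where
  r a b := φ.r a.out b.out
  iseqv := ⟨fun _ => φ.iseqv.refl _, φ.iseqv.symm, φ.iseqv.trans⟩
  compat o x y hxy := by
    have hx := h _ _ (θ.out_rel (A.interp o fun i => (x i).out))
    have hy := h _ _ (θ.out_rel (A.interp o fun i => (y i).out))
    exact φ.iseqv.trans hx (φ.iseqv.trans (φ.compat o _ _ hxy) (φ.iseqv.symm hy))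

/-- Finitely subdirectly irreducible: `⊥` is meet irreducible in the congruence lattice. -/
def IsFSI {S : Signature} (A : SAlgebra S) : Prop :=
  ∀ θ φ : SCon A, θ ⊓ φ = ⊥ → θ = ⊥ ∨ φ = ⊥

/-- Subdirectly irreducible: the congruence lattice has a monolith. -/
def IsSubdirectlyIrreducible {S : Signature} (A : SAlgebra S) : Prop :=
  ∃ μ : SCon A, μ ≠ ⊥ ∧ ∀ θ : SCon A, θ ≠ ⊥ → μ ≤ θ


section AuxiliaryLemmas

namespace ARsi

variable {S : Signature}

/-- The equality congruence. -/
def eqCon (A : SAlgebra S) : SCon A where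
  r x y := x = y
  iseqv := ⟨fun _ => rfl, Eq.symm, Eq.trans⟩
  compat o x y h := by rw [funext h]

/-- The all congruence. -/
def allCon (A : SAlgebra S) : SCon A where
  r _ _ := True
  iseqv := ⟨fun _ => trivial, fun _ => trivial, fun _ _ => trivial⟩
  compat _ _ _ _ := trivial

theorem le_def {A : SAlgebra S} {a b : SCon A} : a ≤ b ↔ ∀ x y, a.r x y → b.r x y := Iff.rfl

theorem ext' {A : SAlgebra S} {a b : SCon A} (h : ∀ x y, a.r x y ↔ b.r x y) : a = b :=
  le_antisymm (fun x y hx => (h x y).1 hx) (fun x y hx => (h x y).2 hx)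

theorem bot_r_iff {A : SAlgebra S} (x y : A.carrier) : (⊥ : SCon A).r x y ↔ x = y :=
  ⟨fun h => (bot_le : (⊥ : SCon A) ≤ eqCon A) x y h,
   fun h => h ▸ (⊥ : SCon A).iseqv.refl x⟩

theorem top_r {A : SAlgebra S} (x y : A.carrier) : (⊤ : SCon A).r x y :=
  (le_top : allCon A ≤ ⊤) x y trivial

/-- The conjunction congruence, used to characterize `⊓`. -/
def andCon {A : SAlgebra S} (a b : SCon A) : SCon A where
  r x y := a.r x y ∧ b.r x y
  iseqv := ⟨fun x => ⟨a.iseqv.refl x, b.iseqv.refl x⟩,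
    fun h => ⟨a.iseqv.symm h.1, b.iseqv.symm h.2⟩,
    fun h h' => ⟨a.iseqv.trans h.1 h'.1, b.iseqv.trans h.2 h'.2⟩⟩
  compat o x y h := ⟨a.compat o x y fun i => (h i).1, b.compat o x y fun i => (h i).2⟩

theorem inf_r_iff {A : SAlgebra S} (a b : SCon A) (x y : A.carrier) :
    (a ⊓ b).r x y ↔ a.r x y ∧ b.r x y := by
  constructor
  · intro h
    exact ⟨(inf_le_left : a ⊓ b ≤ a) x y h, (inf_le_right : a ⊓ b ≤ b) x y h⟩
  · intro h
    have h1 : andCon a b ≤ a := fun x y hx => hx.1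
    have h2 : andCon a b ≤ b := fun x y hx => hx.2
    exact (le_inf h1 h2 : andCon a b ≤ a ⊓ b) x y h

theorem ne_bot_iff {A : SAlgebra S} (a : SCon A) : a ≠ ⊥ ↔ ∃ x y, a.r x y ∧ x ≠ y := by
  constructor
  · intro h
    by_contra hc
    push_neg at hc
    refine h (le_antisymm (fun x y hx => ?_) bot_le)
    rcases Classical.em (x = y) with he | he
    · exact he ▸ (⊥ : SCon A).iseqv.refl x
    · exact absurd (hc x y hx) (by simpa using he)
  · rintro ⟨x, y, hxy, hne⟩ h
    rw [h] at hxy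
    exact hne ((bot_r_iff x y).1 hxy)

theorem not_le_iff {A : SAlgebra S} {a b : SCon A} : ¬ a ≤ b ↔ ∃ x y, a.r x y ∧ ¬ b.r x y := by
  rw [le_def]
  push_neg
  rfl

theorem lt_witness {A : SAlgebra S} {a b : SCon A} (h : a < b) :
    ∃ x y, b.r x y ∧ ¬ a.r x y := not_le_iff.1 h.not_ge

/-- comap lemmas -/
theorem comap_r {A B : SAlgebra S} (f : SHom A B) (a : SCon B) (x y : A.carrier) :
    (SCon.comap f a).r x y ↔ a.r (f.toFun x) (f.toFun y) := Iff.rfl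

theorem comap_mono {A B : SAlgebra S} (f : SHom A B) {a b : SCon B} (h : a ≤ b) :
    SCon.comap f a ≤ SCon.comap f b := fun x y hx => h _ _ hx

theorem comap_inf {A B : SAlgebra S} (f : SHom A B) (a b : SCon B) :
    SCon.comap f (a ⊓ b) = SCon.comap f a ⊓ SCon.comap f b := by
  apply ext'
  intro x y
  rw [inf_r_iff]
  exact inf_r_iff a b _ _

/-- Kernel congruence of a homomorphism. -/
def kerCon {A B : SAlgebra S} (f : SHom A B) : SCon A where
  r x y := f.toFun x = f.toFun y
  iseqv := ⟨fun _ => rfl, Eq.symm, Eq.trans⟩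
  compat o x y h := by
    show f.toFun (A.interp o x) = f.toFun (A.interp o y)
    rw [f.map, f.map, funext h]

theorem comap_ker_eq_bot {A B : SAlgebra S} (f : SHom A B) (g : SHom B A)
    (h : ∀ x, g.toFun (f.toFun x) = x) : SCon.comap f (kerCon g) = ⊥ := by
  apply ext'
  intro x y
  rw [bot_r_iff]
  constructor
  · intro hk
    have hk' : g.toFun (f.toFun x) = g.toFun (f.toFun y) := hk
    rw [h, h] at hk'
    exact hk'
  · rintro rfl
    exact rfl

/-- finite bound inside a chain -/
theorem chain_finite_bound {A : SAlgebra S} {c : Set (SCon A)} (hc : IsChain (· ≤ ·) c)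
    {y : SCon A} (hy : y ∈ c) {k : ℕ} (F : Fin k → SCon A) (hF : ∀ i, F i ∈ c) :
    ∃ Θ ∈ c, ∀ i, F i ≤ Θ := by
  induction k with
  | zero => exact ⟨y, hy, fun i => i.elim0⟩
  | succ n ih =>
    obtain ⟨Θ, hΘc, hΘ⟩ := ih (fun i => F i.succ) (fun i => hF _)
    rcases Classical.em (F 0 = Θ) with he | he
    · refine ⟨Θ, hΘc, fun i => ?_⟩
      refine Fin.cases (he ▸ le_rfl) (fun j => hΘ j) i
    · rcases hc.total (hF 0) hΘc with h | h
      · exact ⟨Θ, hΘc, fun i => Fin.cases h (fun j => hΘ j) i⟩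
      · exact ⟨F 0, hF 0, fun i => Fin.cases le_rfl (fun j => le_trans (hΘ j) h) i⟩

/-- Supremum of a nonempty chain of congruences, as a congruence. -/
def chainSup {A : SAlgebra S} (c : Set (SCon A)) (hc : IsChain (· ≤ ·) c)
    (y : SCon A) (hy : y ∈ c) : SCon A where
  r x z := ∃ Θ ∈ c, Θ.r x z
  iseqv := by
    refine ⟨fun x => ⟨y, hy, y.iseqv.refl x⟩, ?_, ?_⟩
    · rintro x z ⟨Θ, hΘ, h⟩
      exact ⟨Θ, hΘ, Θ.iseqv.symm h⟩
    · rintro x z w ⟨Θ1, h1, hr1⟩ ⟨Θ2, h2, hr2⟩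
      rcases Classical.em (Θ1 = Θ2) with he | he
      · exact ⟨Θ2, h2, Θ2.iseqv.trans (he ▸ hr1) hr2⟩
      · rcases hc.total h1 h2 with h | h
        · exact ⟨Θ2, h2, Θ2.iseqv.trans (h _ _ hr1) hr2⟩
        · exact ⟨Θ1, h1, Θ1.iseqv.trans hr1 (h _ _ hr2)⟩
  compat o x z h := by
    choose F hFc hFr using h
    obtain ⟨Θ, hΘc, hΘ⟩ := chain_finite_bound hc hy F hFc
    exact ⟨Θ, hΘc, Θ.compat o x z fun i => hΘ i _ _ (hFr i)⟩

theorem le_chainSup {A : SAlgebra S} {c : Set (SCon A)} (hc : IsChain (· ≤ ·) c)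
    {y : SCon A} (hy : y ∈ c) {Θ : SCon A} (hΘ : Θ ∈ c) : Θ ≤ chainSup c hc y hy :=
  fun x z h => ⟨Θ, hΘ, h⟩

/-- Existence of a maximal congruence with trivial comap along an injective hom. -/
theorem exists_max_trivial_comap {A B : SAlgebra S} (f : SHom A B)
    (hinj : Function.Injective f.toFun) :
    ∃ Θ : SCon B, SCon.comap f Θ = ⊥ ∧
      ∀ Ψ : SCon B, SCon.comap f Ψ = ⊥ → Θ ≤ Ψ → Ψ = Θ := by
  have hbot : SCon.comap f (⊥ : SCon B) = ⊥ := by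
    apply ext'
    intro x y
    rw [comap_r, bot_r_iff, bot_r_iff]
    exact ⟨fun h => hinj h, fun h => h ▸ rfl⟩
  have hub : ∀ c ⊆ {Θ : SCon B | SCon.comap f Θ = ⊥}, IsChain (· ≤ ·) c →
      ∀ y ∈ c, ∃ ub ∈ {Θ : SCon B | SCon.comap f Θ = ⊥}, ∀ z ∈ c, z ≤ ub := by
    intro c hcs hchain y hy
    refine ⟨chainSup c hchain y hy, ?_, fun z hz => le_chainSup hchain hy hz⟩
    apply ext'
    intro x z
    rw [comap_r, bot_r_iff]
    constructor
    · rintro ⟨Θ, hΘ, h⟩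
      have hmem := hcs hΘ
      have h2 : (SCon.comap f Θ).r x z := h
      rw [hmem] at h2
      exact (bot_r_iff x z).1 h2
    · rintro rfl
      exact ⟨y, hy, y.iseqv.refl _⟩
  obtain ⟨m, _, hm⟩ := zorn_le_nonempty₀ {Θ : SCon B | SCon.comap f Θ = ⊥} hub ⊥ hbot
  exact ⟨m, hm.1, fun Ψ hΨ hle => le_antisymm (hm.2 hΨ hle) hle⟩

theorem mk_eq_iff {A : SAlgebra S} (θ : SCon A) (x y : A.carrier) :
    Quotient.mk θ.setoid x = Quotient.mk θ.setoid y ↔ θ.r x y :=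
  ⟨fun h => @Quotient.exact _ θ.setoid _ _ h, fun h => Quotient.sound h⟩

theorem quotHom_surjective {A : SAlgebra S} (θ : SCon A) :
    Function.Surjective (SHom.quotHom A θ).toFun :=
  fun q => ⟨q.out, @Quotient.out_eq _ θ.setoid q⟩

theorem V_quot {V : SAlgebra S → Prop} (hVar : IsVariety V) {A : SAlgebra S} (hA : V A)
    (θ : SCon A) : V (A.quot θ) :=
  hVar.2.1 A (A.quot θ) (SHom.quotHom A θ) (quotHom_surjective θ) hA

/-- Embedding of the binary product into a `Bool`-indexed product. -/
def prodToPi (B C : SAlgebra S) : SHom (B.prod C) (SAlgebra.pi (fun b : Bool => cond b B C)) where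
  toFun p := fun b => match b with
    | true => p.1
    | false => p.2
  map o x := by
    funext b
    cases b <;> rfl

theorem V_prod {V : SAlgebra S → Prop} (hVar : IsVariety V) {B C : SAlgebra S}
    (hB : V B) (hC : V C) : V (B.prod C) := by
  have hpi : V (SAlgebra.pi (fun b : Bool => cond b B C)) := by
    refine hVar.2.2 Bool _ (fun b => ?_)
    cases b
    · exact hC
    · exact hB
  refine hVar.1 _ _ (prodToPi B C) ?_ hpi
  intro p q h
  have h1 := congrFun h true
  have h2 := congrFun h false
  exact Prod.ext h1 h2


/-! ### Coordinate congruences on a binary product -/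

/-- The congruence identifying pairs with equal first coordinate collapses the second factor. -/
def fstCon (B C : SAlgebra S) : SCon (B.prod C) where
  r x y := x.1 = y.1
  iseqv := ⟨fun _ => rfl, Eq.symm, Eq.trans⟩
  compat o x y h := by
    show B.interp o (fun i => (x i).1) = B.interp o (fun i => (y i).1)
    exact congrArg _ (funext h)

def sndCon (B C : SAlgebra S) : SCon (B.prod C) where
  r x y := x.2 = y.2
  iseqv := ⟨fun _ => rfl, Eq.symm, Eq.trans⟩
  compat o x y h := by
    show C.interp o (fun i => (x i).2) = C.interp o (fun i => (y i).2)
    exact congrArg _ (funext h)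

theorem fst_inf_snd (B C : SAlgebra S) : fstCon B C ⊓ sndCon B C = ⊥ := by
  apply ext'
  intro x y
  rw [inf_r_iff, bot_r_iff]
  exact ⟨fun h => Prod.ext h.1 h.2, fun h => ⟨congrArg Prod.fst h, congrArg Prod.snd h⟩⟩

theorem snd_inf_fst (B C : SAlgebra S) : sndCon B C ⊓ fstCon B C = ⊥ := by
  rw [inf_comm]
  exact fst_inf_snd B C

theorem fst_sup_snd (B C : SAlgebra S) : fstCon B C ⊔ sndCon B C = ⊤ := by
  refine le_antisymm le_top ?_
  intro x y _
  have h1 : (fstCon B C ⊔ sndCon B C).r x (x.1, y.2) :=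
    (le_sup_left : fstCon B C ≤ _) _ _ rfl
  have h2 : (fstCon B C ⊔ sndCon B C).r (x.1, y.2) y :=
    (le_sup_right : sndCon B C ≤ _) _ _ rfl
  exact (fstCon B C ⊔ sndCon B C).iseqv.trans h1 h2

/-- The canonical homomorphism `A → A/θ × A/φ`. -/
def pairEmb (A : SAlgebra S) (θ φ : SCon A) : SHom A ((A.quot θ).prod (A.quot φ)) where
  toFun a := (Quotient.mk θ.setoid a, Quotient.mk φ.setoid a)
  map o x := Prod.ext ((SHom.quotHom A θ).map o x) ((SHom.quotHom A φ).map o x)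

theorem comap_pairEmb_fst {A : SAlgebra S} (θ φ : SCon A) :
    SCon.comap (pairEmb A θ φ) (fstCon (A.quot θ) (A.quot φ)) = θ := by
  apply ext'
  intro x y
  exact mk_eq_iff θ x y

theorem comap_pairEmb_snd {A : SAlgebra S} (θ φ : SCon A) :
    SCon.comap (pairEmb A θ φ) (sndCon (A.quot θ) (A.quot φ)) = φ := by
  apply ext'
  intro x y
  exact mk_eq_iff φ x y

/-! ### The binary decomposition theorem -/

/-- For a mutually maximal pair of complementary congruences on an absolute retract in a
congruence modular variety, the canonical map to the product of quotients is surjective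
(this is the Chinese remainder property). -/
theorem binary_decomp {V : SAlgebra S → Prop} {A : SAlgebra S}
    (hV : IsCongruenceModularVariety V) (hA : V A)
    (har : IsAbsoluteRetract V A) (θ φ : SCon A)
    (hmeet : θ ⊓ φ = ⊥)
    (hθmax : ∀ c : SCon A, θ < c → c ⊓ φ ≠ ⊥)
    (hφmax : ∀ c : SCon A, φ < c → c ⊓ θ ≠ ⊥) :
    ∀ u v : A.carrier, ∃ w, θ.r w u ∧ φ.r w v := by
  obtain ⟨hVar, hmod⟩ := hV
  set P : SAlgebra S := (A.quot θ).prod (A.quot φ) with hPdef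
  set e : SHom A P := pairEmb A θ φ with hedef
  set ac : SCon P := fstCon (A.quot θ) (A.quot φ) with hacdef
  set bc : SCon P := sndCon (A.quot θ) (A.quot φ) with hbcdef
  have hVP : V P := V_prod hVar (V_quot hVar hA θ) (V_quot hVar hA φ)
  haveI : IsModularLattice (SCon P) := hmod P hVP
  have he_inj : Function.Injective e.toFun := by
    intro x y h
    have h1 : θ.r x y := (mk_eq_iff θ x y).1 (congrArg Prod.fst h)
    have h2 : φ.r x y := (mk_eq_iff φ x y).1 (congrArg Prod.snd h)
    have h3 : (θ ⊓ φ).r x y := (inf_r_iff θ φ x y).2 ⟨h1, h2⟩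
    rw [hmeet] at h3
    exact (bot_r_iff x y).1 h3
  -- the two side lemmas
  have side_fst : ∀ Ξ : SCon P, (∀ p q, Ξ.r p q → p.1 = q.1) → Ξ ≠ ⊥ →
      ∃ w₁ w₂, w₁ ≠ w₂ ∧ θ.r w₁ w₂ ∧ Ξ.r (e.toFun w₁) (e.toFun w₂) := by
    intro Ξ hsh hne
    obtain ⟨x, y, hxy, hnexy⟩ := (ne_bot_iff Ξ).1 hne
    have h1 : x.1 = y.1 := hsh _ _ hxy
    have h2 : x.2 ≠ y.2 := fun h => hnexy (Prod.ext h1 h)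
    obtain ⟨v₁, hv₁⟩ := quotHom_surjective φ x.2
    obtain ⟨v₂, hv₂⟩ := quotHom_surjective φ y.2
    have hc1 : bc.r (e.toFun v₁) x := hv₁
    have hc2 : bc.r y (e.toFun v₂) := hv₂.symm
    have hjoin : (Ξ ⊔ bc).r (e.toFun v₁) (e.toFun v₂) := by
      refine (Ξ ⊔ bc).iseqv.trans ((le_sup_right : bc ≤ Ξ ⊔ bc) _ _ hc1) ?_
      refine (Ξ ⊔ bc).iseqv.trans ((le_sup_left : Ξ ≤ Ξ ⊔ bc) _ _ hxy) ?_
      exact (le_sup_right : bc ≤ Ξ ⊔ bc) _ _ hc2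
    have hnotφ : ¬ φ.r v₁ v₂ := by
      intro h
      exact h2 (by rw [← hv₁, ← hv₂]; exact Quotient.sound h)
    have hχθ : φ ≤ SCon.comap e (Ξ ⊔ bc) := by
      rw [← comap_pairEmb_snd θ φ]
      exact comap_mono e (le_sup_right : bc ≤ Ξ ⊔ bc)
    have hlt : φ < SCon.comap e (Ξ ⊔ bc) := by
      refine lt_of_le_of_ne hχθ ?_
      intro heq
      exact hnotφ (by rw [heq]; exact hjoin)
    obtain ⟨w₁, w₂, hw, hwne⟩ := (ne_bot_iff _).1 (hφmax _ hlt)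
    rw [inf_r_iff] at hw
    have hΞfst : Ξ ≤ ac := fun p q h => hsh p q h
    have hmodeq : (Ξ ⊔ bc) ⊓ ac = Ξ := by
      rw [sup_inf_assoc_of_le bc hΞfst, snd_inf_fst, sup_bot_eq]
    have hefst : ac.r (e.toFun w₁) (e.toFun w₂) := (mk_eq_iff θ w₁ w₂).2 hw.2
    have hmem : ((Ξ ⊔ bc) ⊓ ac).r (e.toFun w₁) (e.toFun w₂) :=
      (inf_r_iff _ _ _ _).2 ⟨hw.1, hefst⟩
    rw [hmodeq] at hmem
    exact ⟨w₁, w₂, hwne, hw.2, hmem⟩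
  have side_snd : ∀ Ξ : SCon P, (∀ p q, Ξ.r p q → p.2 = q.2) → Ξ ≠ ⊥ →
      ∃ w₁ w₂, w₁ ≠ w₂ ∧ φ.r w₁ w₂ ∧ Ξ.r (e.toFun w₁) (e.toFun w₂) := by
    intro Ξ hsh hne
    obtain ⟨x, y, hxy, hnexy⟩ := (ne_bot_iff Ξ).1 hne
    have h1 : x.2 = y.2 := hsh _ _ hxy
    have h2 : x.1 ≠ y.1 := fun h => hnexy (Prod.ext h h1)
    obtain ⟨v₁, hv₁⟩ := quotHom_surjective θ x.1
    obtain ⟨v₂, hv₂⟩ := quotHom_surjective θ y.1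
    have hc1 : ac.r (e.toFun v₁) x := hv₁
    have hc2 : ac.r y (e.toFun v₂) := hv₂.symm
    have hjoin : (Ξ ⊔ ac).r (e.toFun v₁) (e.toFun v₂) := by
      refine (Ξ ⊔ ac).iseqv.trans ((le_sup_right : ac ≤ Ξ ⊔ ac) _ _ hc1) ?_
      refine (Ξ ⊔ ac).iseqv.trans ((le_sup_left : Ξ ≤ Ξ ⊔ ac) _ _ hxy) ?_
      exact (le_sup_right : ac ≤ Ξ ⊔ ac) _ _ hc2
    have hnotθ : ¬ θ.r v₁ v₂ := by
      intro h
      exact h2 (by rw [← hv₁, ← hv₂]; exact Quotient.sound h)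
    have hχθ : θ ≤ SCon.comap e (Ξ ⊔ ac) := by
      rw [← comap_pairEmb_fst θ φ]
      exact comap_mono e (le_sup_right : ac ≤ Ξ ⊔ ac)
    have hlt : θ < SCon.comap e (Ξ ⊔ ac) := by
      refine lt_of_le_of_ne hχθ ?_
      intro heq
      exact hnotθ (by rw [heq]; exact hjoin)
    obtain ⟨w₁, w₂, hw, hwne⟩ := (ne_bot_iff _).1 (hθmax _ hlt)
    rw [inf_r_iff] at hw
    have hΞsnd : Ξ ≤ bc := fun p q h => hsh p q h
    have hmodeq : (Ξ ⊔ ac) ⊓ bc = Ξ := by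
      rw [sup_inf_assoc_of_le ac hΞsnd, fst_inf_snd, sup_bot_eq]
    have hesnd : bc.r (e.toFun w₁) (e.toFun w₂) := (mk_eq_iff φ w₁ w₂).2 hw.2
    have hmem : ((Ξ ⊔ ac) ⊓ bc).r (e.toFun w₁) (e.toFun w₂) :=
      (inf_r_iff _ _ _ _).2 ⟨hw.1, hesnd⟩
    rw [hmodeq] at hmem
    exact ⟨w₁, w₂, hwne, hw.2, hmem⟩
  -- a maximal congruence with trivial restriction
  obtain ⟨Θ, hΘcom, hΘmax⟩ := exists_max_trivial_comap e he_inj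
  -- the retraction G : P → A
  have hVQ : V (P.quot Θ) := V_quot hVar hVP Θ
  have hj_inj : Function.Injective (SHom.comp (SHom.quotHom P Θ) e).toFun := by
    intro x y h
    have h1 : Θ.r (e.toFun x) (e.toFun y) := (mk_eq_iff Θ _ _).1 h
    have h2 : (SCon.comap e Θ).r x y := h1
    rw [hΘcom] at h2
    exact (bot_r_iff x y).1 h2
  obtain ⟨p, hp⟩ := har (P.quot Θ) hVQ (SHom.comp (SHom.quotHom P Θ) e) hj_inj
  set G : SHom P A := SHom.comp p (SHom.quotHom P Θ) with hGdef
  have hGe : ∀ x, G.toFun (e.toFun x) = x := fun x => hp x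
  have hker_triv : SCon.comap e (kerCon G) = ⊥ := comap_ker_eq_bot e G hGe
  have hΘker : Θ ≤ kerCon G := by
    intro x y h
    show p.toFun (Quotient.mk Θ.setoid x) = p.toFun (Quotient.mk Θ.setoid y)
    rw [(mk_eq_iff Θ x y).2 h]
  have hkerΘ : kerCon G = Θ := hΘmax _ hker_triv hΘker
  -- the essential step : Θ = ⊥
  have hΘbot : Θ = ⊥ := by
    by_contra hne
    -- Step 1 : Θ meets both coordinate kernels trivially
    have hΘfst : Θ ⊓ ac = ⊥ := by
      by_contra h0
      obtain ⟨w₁, w₂, hwne, _, hΞ⟩ :=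
        side_fst (Θ ⊓ ac) (fun p q h => ((inf_r_iff _ _ _ _).1 h).2) h0
      have h1 : Θ.r (e.toFun w₁) (e.toFun w₂) := ((inf_r_iff _ _ _ _).1 hΞ).1
      have h2 : (SCon.comap e Θ).r w₁ w₂ := h1
      rw [hΘcom] at h2
      exact hwne ((bot_r_iff _ _).1 h2)
    have hΘsnd : Θ ⊓ bc = ⊥ := by
      by_contra h0
      obtain ⟨w₁, w₂, hwne, _, hΞ⟩ :=
        side_snd (Θ ⊓ bc) (fun p q h => ((inf_r_iff _ _ _ _).1 h).2) h0
      have h1 : Θ.r (e.toFun w₁) (e.toFun w₂) := ((inf_r_iff _ _ _ _).1 hΞ).1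
      have h2 : (SCon.comap e Θ).r w₁ w₂ := h1
      rw [hΘcom] at h2
      exact hwne ((bot_r_iff _ _).1 h2)
    -- Step 2 : (Θ ⊔ ac) ⊓ bc ≠ ⊥
    have hstep2 : (Θ ⊔ ac) ⊓ bc ≠ ⊥ := by
      intro h0
      have h1 : (ac ⊔ bc) ⊓ (Θ ⊔ ac) = ac ⊔ (bc ⊓ (Θ ⊔ ac)) :=
        sup_inf_assoc_of_le bc (le_sup_right : ac ≤ Θ ⊔ ac)
      rw [fst_sup_snd, top_inf_eq, inf_comm bc (Θ ⊔ ac), h0, sup_bot_eq] at h1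
      have h2 : Θ ≤ ac := le_trans (le_sup_left : Θ ≤ Θ ⊔ ac) (le_of_eq h1)
      have h3 : Θ = Θ ⊓ ac := le_antisymm (le_inf le_rfl h2) inf_le_left
      rw [hΘfst] at h3
      exact hne h3
    -- Step 3 : the congruence D = ψ ⊓ φ is nontrivial
    have hσ : SCon.comap e (Θ ⊔ ac) ⊓ φ ≠ ⊥ := by
      obtain ⟨w₁, w₂, hwne, hφw, hΞ⟩ :=
        side_snd ((Θ ⊔ ac) ⊓ bc) (fun p q h => ((inf_r_iff _ _ _ _).1 h).2) hstep2
      refine (ne_bot_iff _).2 ⟨w₁, w₂, ?_, hwne⟩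
      rw [inf_r_iff]
      exact ⟨((inf_r_iff _ _ _ _).1 hΞ).1, hφw⟩
    set D : SCon A := SCon.comap e (Θ ⊔ ac) ⊓ φ with hDdef
    set Γ : SCon P := SCon.comap G D with hΓdef
    have hf1 : SCon.comap e Γ = D := by
      apply ext'
      intro x y
      show D.r (G.toFun (e.toFun x)) (G.toFun (e.toFun y)) ↔ D.r x y
      rw [hGe, hGe]
    have hf2 : Θ ≤ Γ := by
      intro x y h
      show D.r (G.toFun x) (G.toFun y)
      rw [hΘker x y h]
      exact D.iseqv.refl _
    have hf3 : Γ ≤ Θ ⊔ ac := by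
      intro z z' h
      have h1 : (SCon.comap e (Θ ⊔ ac)).r (G.toFun z) (G.toFun z') :=
        (inf_le_left : D ≤ _) _ _ h
      have h2 : (Θ ⊔ ac).r (e.toFun (G.toFun z)) (e.toFun (G.toFun z')) := h1
      have h3 : (Θ ⊔ ac).r z (e.toFun (G.toFun z)) := by
        refine (le_sup_left : Θ ≤ Θ ⊔ ac) _ _ ?_
        rw [← hkerΘ]
        show G.toFun z = G.toFun (e.toFun (G.toFun z))
        rw [hGe]
      have h4 : (Θ ⊔ ac).r (e.toFun (G.toFun z')) z' := by
        refine (le_sup_left : Θ ≤ Θ ⊔ ac) _ _ ?_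
        rw [← hkerΘ]
        show G.toFun (e.toFun (G.toFun z')) = G.toFun z'
        rw [hGe]
      exact (Θ ⊔ ac).iseqv.trans h3 ((Θ ⊔ ac).iseqv.trans h2 h4)
    have hΓnle : ¬ Γ ≤ Θ := by
      intro hle
      have : D ≤ ⊥ := by
        rw [← hf1, ← hΘcom]
        exact comap_mono e hle
      exact hσ (le_antisymm this bot_le)
    have hξ₂ : ac ⊓ Γ ≠ ⊥ := by
      intro h0
      have h1 : (Θ ⊔ ac) ⊓ Γ = Θ ⊔ (ac ⊓ Γ) := sup_inf_assoc_of_le ac hf2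
      rw [h0, sup_bot_eq] at h1
      refine hΓnle ?_
      rw [← h1]
      exact le_inf hf3 le_rfl
    obtain ⟨w₁, w₂, hwne, hθw, hΞ⟩ :=
      side_fst (ac ⊓ Γ) (fun p q h => ((inf_r_iff _ _ _ _).1 h).1) hξ₂
    have hΓw : Γ.r (e.toFun w₁) (e.toFun w₂) := ((inf_r_iff _ _ _ _).1 hΞ).2
    have hDw : D.r w₁ w₂ := by
      have h1 : (SCon.comap e Γ).r w₁ w₂ := hΓw
      rw [hf1] at h1
      exact h1
    have hφw : φ.r w₁ w₂ := (inf_le_right : D ≤ φ) _ _ hDw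
    have hbotw : (θ ⊓ φ).r w₁ w₂ := (inf_r_iff _ _ _ _).2 ⟨hθw, hφw⟩
    rw [hmeet] at hbotw
    exact hwne ((bot_r_iff _ _).1 hbotw)
  -- conclusion : surjectivity
  intro u v
  refine ⟨G.toFun (Quotient.mk θ.setoid u, Quotient.mk φ.setoid v), ?_, ?_⟩
  · have hz : (kerCon G).r (Quotient.mk θ.setoid u, Quotient.mk φ.setoid v)
        (e.toFun (G.toFun (Quotient.mk θ.setoid u, Quotient.mk φ.setoid v))) := by
      show G.toFun _ = G.toFun _
      rw [hGe]
    rw [hkerΘ, hΘbot] at hz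
    have hz' := (bot_r_iff _ _).1 hz
    have h1 := congrArg Prod.fst hz'.symm
    exact (mk_eq_iff θ _ _).1 h1
  · have hz : (kerCon G).r (Quotient.mk θ.setoid u, Quotient.mk φ.setoid v)
        (e.toFun (G.toFun (Quotient.mk θ.setoid u, Quotient.mk φ.setoid v))) := by
      show G.toFun _ = G.toFun _
      rw [hGe]
    rw [hkerΘ, hΘbot] at hz
    have hz' := (bot_r_iff _ _).1 hz
    have h1 := congrArg Prod.snd hz'.symm
    exact (mk_eq_iff φ _ _).1 h1


/-! ### Well-foundedness from finite height -/

theorem no_increasing_seq {A : SAlgebra S} {N : ℕ}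
    (hfd : ∀ l : List (SCon A), l.Chain' (· < ·) → l.length ≤ N)
    (g : ℕ → SCon A) (hg : ∀ k, g k < g (k + 1)) : False := by
  have hchain : ((List.range (N + 1)).map g).Chain' (· < ·) := by
    show List.IsChain _ _
    rw [List.isChain_map]
    rw [List.isChain_range_succ]
    intro m _
    exact hg m
  have hlen := hfd _ hchain
  rw [List.length_map, List.length_range] at hlen
  omega

theorem no_decreasing_seq {A : SAlgebra S} {N : ℕ}
    (hfd : ∀ l : List (SCon A), l.Chain' (· < ·) → l.length ≤ N)
    (g : ℕ → SCon A) (hg : ∀ k, g (k + 1) < g k) : False := by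
  have hchain : ((List.range (N + 1)).map (fun j => g (N - j))).Chain' (· < ·) := by
    show List.IsChain _ _
    rw [List.isChain_map, List.isChain_range_succ]
    intro m hm
    show g (N - m) < g (N - (m + 1))
    have h1 : N - m = (N - (m + 1)) + 1 := by omega
    rw [h1]
    exact hg _
  have hlen := hfd _ hchain
  rw [List.length_map, List.length_range] at hlen
  omega

theorem wf_lt {A : SAlgebra S} {N : ℕ}
    (hfd : ∀ l : List (SCon A), l.Chain' (· < ·) → l.length ≤ N) :
    WellFounded ((· < ·) : SCon A → SCon A → Prop) := by
  rw [RelEmbedding.wellFounded_iff_isEmpty]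
  constructor
  intro f
  exact no_decreasing_seq hfd f (fun k => f.map_rel_iff.2 (by omega : (k:ℕ) + 1 > k))

theorem wf_gt {A : SAlgebra S} {N : ℕ}
    (hfd : ∀ l : List (SCon A), l.Chain' (· < ·) → l.length ≤ N) :
    WellFounded (fun a b : SCon A => b < a) := by
  rw [RelEmbedding.wellFounded_iff_isEmpty]
  constructor
  intro f
  exact no_increasing_seq hfd f (fun k => f.map_rel_iff.2 (by omega : (k:ℕ) + 1 > k))

/-! ### Dichotomy : above any non-top congruence there is a monolith or a splitting pair -/

theorem foldr_inf_le_mem {A : SAlgebra S} :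
    ∀ (l : List (SCon A)) (c : SCon A), c ∈ l → l.foldr (· ⊓ ·) ⊤ ≤ c := by
  intro l
  induction l with
  | nil => intro c hc; exact absurd hc List.not_mem_nil
  | cons d l ih =>
    intro c hc
    rcases List.mem_cons.1 hc with h | h
    · exact h ▸ inf_le_left
    · exact le_trans inf_le_right (ih c h)

theorem le_foldr_inf {A : SAlgebra S} {ξ : SCon A} :
    ∀ (l : List (SCon A)), (∀ c ∈ l, ξ < c) → ξ ≤ l.foldr (· ⊓ ·) ⊤ := by
  intro l
  induction l with
  | nil => intro _; exact le_top
  | cons d l ih =>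
    intro h
    exact le_inf (h d List.mem_cons_self).le (ih fun c hc => h c (List.mem_cons_of_mem d hc))

theorem dichotomy {A : SAlgebra S} {N : ℕ}
    (hfd : ∀ l : List (SCon A), l.Chain' (· < ·) → l.length ≤ N)
    (ξ : SCon A) (hξ : ξ ≠ ⊤) :
    (∃ μ, ξ < μ ∧ ∀ ρ, ξ < ρ → μ ≤ ρ) ∨
    (∃ a b, ξ < a ∧ ξ < b ∧ a ⊓ b = ξ) := by
  classical
  set M : Set (SCon A) := {x | ∃ l : List (SCon A), (∀ c ∈ l, ξ < c) ∧ x = l.foldr (· ⊓ ·) ⊤}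
    with hMdef
  have hMne : M.Nonempty := ⟨⊤, [], by simp, rfl⟩
  obtain ⟨μ, hμM, hμmin⟩ := (wf_lt hfd).has_min M hMne
  obtain ⟨l, hl, hfold⟩ := hμM
  have hξμ : ξ ≤ μ := hfold ▸ le_foldr_inf l hl
  have hμle : ∀ c, ξ < c → μ ≤ c := by
    intro c hc
    have hmem : μ ⊓ c ∈ M := ⟨c :: l, by
      intro d hd
      rcases List.mem_cons.1 hd with h | h
      · exact h ▸ hc
      · exact hl d h, by rw [List.foldr_cons, ← hfold, inf_comm]⟩
    have hle : μ ⊓ c ≤ μ := inf_le_left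
    have : ¬ μ ⊓ c < μ := hμmin _ hmem
    have heq : μ ⊓ c = μ := by
      by_contra hne
      exact this (lt_of_le_of_ne hle hne)
    rw [← heq]
    exact inf_le_right
  rcases Classical.em (ξ = μ) with heq | hne
  · -- μ = ξ : find a minimal length splitting list
    right
    set Ls : Set ℕ := {n | ∃ l' : List (SCon A), (∀ c ∈ l', ξ < c) ∧
      l'.foldr (· ⊓ ·) ⊤ = ξ ∧ l'.length = n} with hLs
    have hLsne : Ls.Nonempty := ⟨l.length, l, hl, by rw [← hfold, heq], rfl⟩
    obtain ⟨l₀, hl₀, hfold₀, hlen₀⟩ := Nat.sInf_mem hLsne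
    match l₀, hlen₀ with
    | [], hlen₀ =>
      exfalso
      simp at hfold₀
      exact hξ hfold₀.symm
    | [c], hlen₀ =>
      exfalso
      have : c ⊓ ⊤ = ξ := hfold₀
      rw [inf_top_eq] at this
      exact absurd (this ▸ hl₀ c List.mem_cons_self) (lt_irrefl ξ)
    | c :: d :: l', hlen₀ =>
      refine ⟨c, (d :: l').foldr (· ⊓ ·) ⊤, hl₀ c List.mem_cons_self, ?_, hfold₀⟩
      have hb1 : ξ ≤ (d :: l').foldr (· ⊓ ·) ⊤ :=
        le_foldr_inf _ (fun x hx => hl₀ x (List.mem_cons_of_mem c hx))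
      refine lt_of_le_of_ne hb1 ?_
      intro hbeq
      have : (d :: l').length ∈ Ls :=
        ⟨d :: l', fun x hx => hl₀ x (List.mem_cons_of_mem c hx), hbeq.symm, rfl⟩
      have hle := Nat.sInf_le this
      rw [← hlen₀] at hle
      simp at hle
  · exact Or.inl ⟨μ, lt_of_le_of_ne hξμ hne, hμle⟩

theorem mutualize {A : SAlgebra S} {N : ℕ}
    (hfd : ∀ l : List (SCon A), l.Chain' (· < ·) → l.length ≤ N)
    {ξ a b : SCon A} (ha : ξ < a) (hb : ξ < b) (hab : a ⊓ b = ξ) :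
    ∃ a' b', ξ < a' ∧ ξ < b' ∧ a' ⊓ b' = ξ ∧
      (∀ ρ, a' < ρ → ρ ⊓ b' ≠ ξ) ∧ (∀ ρ, b' < ρ → a' ⊓ ρ ≠ ξ) := by
  obtain ⟨a', ⟨haa', ha'b⟩, hmax⟩ :=
    (wf_gt hfd).has_min {x | a ≤ x ∧ x ⊓ b = ξ} ⟨a, le_rfl, hab⟩
  obtain ⟨b', ⟨hbb', ha'b'⟩, hmax'⟩ :=
    (wf_gt hfd).has_min {x | b ≤ x ∧ a' ⊓ x = ξ} ⟨b, le_rfl, ha'b⟩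
  refine ⟨a', b', lt_of_lt_of_le ha haa', lt_of_lt_of_le hb hbb', ha'b', ?_, ?_⟩
  · intro ρ hρ hcon
    have hξρ : ξ ≤ ρ ⊓ b := le_inf (le_trans (lt_of_lt_of_le ha haa').le hρ.le) hb.le
    have h1 : ρ ⊓ b = ξ :=
      le_antisymm (hcon ▸ inf_le_inf_left ρ hbb') hξρ
    exact hmax ρ ⟨le_trans haa' hρ.le, h1⟩ hρ
  · intro ρ hρ hcon
    exact hmax' ρ ⟨le_trans hbb' hρ.le, hcon⟩ hρ

/-! ### Maximality transfer lemmas -/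

theorem inf_eq_bot_of_inj {A : SAlgebra S} {ξ ζ : SCon A}
    (hIJ : ∀ x y, ξ.r x y → ζ.r x y → x = y) : ξ ⊓ ζ = ⊥ := by
  apply ext'
  intro x y
  rw [inf_r_iff, bot_r_iff]
  exact ⟨fun h => hIJ x y h.1 h.2, fun h => h ▸ ⟨ξ.iseqv.refl x, ζ.iseqv.refl x⟩⟩

theorem max_vs {A : SAlgebra S} {ξ ζ : SCon A}
    (hSUR : ∀ u v, ∃ w, ξ.r w u ∧ ζ.r w v) :
    ∀ c, ξ < c → c ⊓ ζ ≠ ⊥ := by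
  intro c hc hcon
  obtain ⟨x, y, hcxy, hnxy⟩ := lt_witness hc
  obtain ⟨p, hpξ, hpζ⟩ := hSUR x y
  have h1 : c.r p y := c.iseqv.trans (hc.le _ _ hpξ) hcxy
  have h2 : (c ⊓ ζ).r p y := (inf_r_iff _ _ _ _).2 ⟨h1, hpζ⟩
  rw [hcon] at h2
  have h3 : p = y := (bot_r_iff _ _).1 h2
  exact hnxy (ξ.iseqv.symm (h3 ▸ hpξ))

theorem max_vs' {A : SAlgebra S} {ξ ζ : SCon A}
    (hSUR : ∀ u v, ∃ w, ξ.r w u ∧ ζ.r w v) :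
    ∀ c, ζ < c → c ⊓ ξ ≠ ⊥ := by
  intro c hc hcon
  obtain ⟨x, y, hcxy, hnxy⟩ := lt_witness hc
  obtain ⟨p, hpξ, hpζ⟩ := hSUR y x
  have h1 : c.r p y := c.iseqv.trans (hc.le _ _ hpζ) hcxy
  have h2 : (c ⊓ ξ).r p y := (inf_r_iff _ _ _ _).2 ⟨h1, hpξ⟩
  rw [hcon] at h2
  have h3 : p = y := (bot_r_iff _ _).1 h2
  exact hnxy (ζ.iseqv.symm (h3 ▸ hpζ))

theorem sup_top_of_SUR {A : SAlgebra S} {ξ ζ : SCon A}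
    (hSUR : ∀ u v, ∃ w, ξ.r w u ∧ ζ.r w v) : ξ ⊔ ζ = ⊤ := by
  refine le_antisymm le_top ?_
  intro x y _
  obtain ⟨w, hwξ, hwζ⟩ := hSUR x y
  exact (ξ ⊔ ζ).iseqv.trans ((ξ ⊔ ζ).iseqv.symm ((le_sup_left : ξ ≤ ξ ⊔ ζ) _ _ hwξ))
    ((le_sup_right : ζ ≤ ξ ⊔ ζ) _ _ hwζ)


/-- The key modular-lattice computation : `b ⊓ ζ` is a maximal complement of `a`. -/
theorem ma_max {A : SAlgebra S} (hmodA : IsModularLattice (SCon A)) {ξ ζ a b : SCon A}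
    (hSUR : ∀ u v, ∃ w, ξ.r w u ∧ ζ.r w v)
    (hξa : ξ ≤ a) (hξb : ξ ≤ b)
    (hbmax : ∀ ρ, b < ρ → a ⊓ ρ ≠ ξ)
    (hζmax : ∀ c, ζ < c → c ⊓ ξ ≠ ⊥) :
    ∀ ρ, b ⊓ ζ < ρ → ρ ⊓ a ≠ ⊥ := by
  intro ρ hρ hcon
  have hsuptop : ξ ⊔ ζ = ⊤ := sup_top_of_SUR hSUR
  have hs1 : ξ ⊔ ζ ⊓ b = b := by
    have h := sup_inf_assoc_of_le (α := SCon A) ζ hξb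
    rw [hsuptop, top_inf_eq] at h
    exact h.symm
  have hs2 : b ≤ ξ ⊔ ρ := by
    conv_lhs => rw [← hs1]
    refine sup_le_sup_left ?_ ξ
    rw [inf_comm]
    exact hρ.le
  have hs3 : (ξ ⊔ ρ) ⊓ a = ξ := by
    rw [sup_inf_assoc_of_le ρ hξa, hcon, sup_bot_eq]
  have hs4 : ξ ⊔ ρ = b := by
    by_contra hne
    have hlt : b < ξ ⊔ ρ := lt_of_le_of_ne hs2 (fun h => hne h.symm)
    refine hbmax _ hlt ?_
    rw [inf_comm]
    exact hs3
  have hρb : ρ ≤ b := le_trans le_sup_right hs4.le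
  have hσ : ζ < ρ ⊔ ζ := by
    refine lt_of_le_of_ne le_sup_right ?_
    intro h
    have hρζ : ρ ≤ ζ := le_trans le_sup_left h.symm.le
    exact absurd (le_inf hρb hρζ) (not_le_of_gt hρ)
  have h6 : (ρ ⊔ ζ) ⊓ b = ρ := by
    rw [sup_inf_assoc_of_le ζ hρb]
    refine sup_eq_left.2 ?_
    rw [inf_comm]
    exact hρ.le
  have h5 : (ρ ⊔ ζ) ⊓ ξ ≤ ρ ⊓ a := by
    refine le_inf ?_ (le_trans inf_le_right hξa)
    refine le_trans (inf_le_inf_left _ hξb) ?_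
    exact le_of_eq h6
  rw [hcon] at h5
  exact hζmax _ hσ (le_antisymm h5 bot_le)


/-! ### Subdirect irreducibility of quotients -/

theorem SI_quot {A : SAlgebra S} {ξ : SCon A}
    (h : ∃ μ, ξ < μ ∧ ∀ ρ, ξ < ρ → μ ≤ ρ) : IsSubdirectlyIrreducible (A.quot ξ) := by
  obtain ⟨μ, hμ, hmin⟩ := h
  refine ⟨SCon.quotCon ξ μ hμ.le, ?_, ?_⟩
  · rw [ne_bot_iff]
    obtain ⟨x, y, hxy, hnxy⟩ := lt_witness hμ
    refine ⟨Quotient.mk ξ.setoid x, Quotient.mk ξ.setoid y, ?_, ?_⟩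
    · show μ.r (Quotient.mk ξ.setoid x).out (Quotient.mk ξ.setoid y).out
      have h1 : ξ.r (Quotient.mk ξ.setoid x).out x := SCon.out_rel ξ x
      have h2 : ξ.r (Quotient.mk ξ.setoid y).out y := SCon.out_rel ξ y
      exact μ.iseqv.trans (hμ.le _ _ h1) (μ.iseqv.trans hxy (μ.iseqv.symm (hμ.le _ _ h2)))
    · intro hc
      exact hnxy ((mk_eq_iff ξ x y).1 hc)
  · intro θ' hθ'
    have hρξ : ξ ≤ SCon.comap (SHom.quotHom A ξ) θ' := by
      intro x y h
      show θ'.r (Quotient.mk ξ.setoid x) (Quotient.mk ξ.setoid y)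
      rw [(mk_eq_iff ξ x y).2 h]
      exact θ'.iseqv.refl _
    have hρne : ξ ≠ SCon.comap (SHom.quotHom A ξ) θ' := by
      intro heq
      obtain ⟨p, q, hpq, hnpq⟩ := (ne_bot_iff θ').1 hθ'
      have h1 : (SCon.comap (SHom.quotHom A ξ) θ').r p.out q.out := by
        show θ'.r (Quotient.mk ξ.setoid p.out) (Quotient.mk ξ.setoid q.out)
        rw [@Quotient.out_eq _ ξ.setoid p, @Quotient.out_eq _ ξ.setoid q]
        exact hpq
      rw [← heq] at h1
      refine hnpq ?_
      rw [← @Quotient.out_eq _ ξ.setoid p, ← @Quotient.out_eq _ ξ.setoid q]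
      exact (mk_eq_iff ξ _ _).2 h1
    have hμρ : μ ≤ SCon.comap (SHom.quotHom A ξ) θ' := hmin _ (lt_of_le_of_ne hρξ hρne)
    intro x y hr
    have h1 : θ'.r (Quotient.mk ξ.setoid x.out) (Quotient.mk ξ.setoid y.out) := hμρ _ _ hr
    rw [← @Quotient.out_eq _ ξ.setoid x, ← @Quotient.out_eq _ ξ.setoid y]
    exact h1

/-! ### The main recursion -/

theorem decomp_rec {V : SAlgebra S → Prop} {A : SAlgebra S} {N : ℕ}
    (hV : IsCongruenceModularVariety V) (hA : V A) (har : IsAbsoluteRetract V A)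
    (hfd : ∀ l : List (SCon A), l.Chain' (· < ·) → l.length ≤ N) :
    ∀ ξ : SCon A, ∀ ζ : SCon A, ξ ≠ ⊤ →
      (∀ x y, ξ.r x y → ζ.r x y → x = y) →
      (∀ u v, ∃ w, ξ.r w u ∧ ζ.r w v) →
      ∃ (m : ℕ) (c : Fin m → SCon A),
        (∀ i, ξ ≤ c i) ∧
        (∀ i, ∃ μ, c i < μ ∧ ∀ ρ, c i < ρ → μ ≤ ρ) ∧
        (∀ x y, (∀ i, (c i).r x y) → ξ.r x y) ∧
        (∀ (t : Fin m → A.carrier) (z : A.carrier), ∃ w, (∀ i, (c i).r w (t i)) ∧ ζ.r w z) := by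
  intro ξ
  refine WellFounded.induction (wf_gt hfd)
    (C := fun ξ : SCon A => ∀ ζ : SCon A, ξ ≠ ⊤ →
      (∀ x y, ξ.r x y → ζ.r x y → x = y) →
      (∀ u v, ∃ w, ξ.r w u ∧ ζ.r w v) →
      ∃ (m : ℕ) (c : Fin m → SCon A),
        (∀ i, ξ ≤ c i) ∧
        (∀ i, ∃ μ, c i < μ ∧ ∀ ρ, c i < ρ → μ ≤ ρ) ∧
        (∀ x y, (∀ i, (c i).r x y) → ξ.r x y) ∧
        (∀ (t : Fin m → A.carrier) (z : A.carrier), ∃ w, (∀ i, (c i).r w (t i)) ∧ ζ.r w z))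
    ξ ?_
  clear ξ
  intro ξ IH ζ hξtop hIJ hSUR
  rcases dichotomy hfd ξ hξtop with ⟨μ, hμlt, hμmin⟩ | ⟨a₀, b₀, ha₀, hb₀, hab₀⟩
  · -- subdirectly irreducible quotient : one factor
    refine ⟨1, fun _ => ξ, fun _ => le_rfl, fun _ => ⟨μ, hμlt, hμmin⟩, ?_, ?_⟩
    · intro x y h
      exact h 0
    · intro t z
      obtain ⟨w, h1, h2⟩ := hSUR (t 0) z
      refine ⟨w, ?_, h2⟩
      intro i
      have : t i = t 0 := by
        congr 1
        omega
      rw [this]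
      exact h1
  · -- splitting case
    obtain ⟨a, b, ha, hb, hab, hamax, hbmax⟩ := mutualize hfd ha₀ hb₀ hab₀
    haveI hmodA : IsModularLattice (SCon A) := hV.2 A hA
    have hξζbot : ξ ⊓ ζ = ⊥ := inf_eq_bot_of_inj hIJ
    have hξmax : ∀ c, ξ < c → c ⊓ ζ ≠ ⊥ := max_vs hSUR
    have hζmax : ∀ c, ζ < c → c ⊓ ξ ≠ ⊥ := max_vs' hSUR
    -- the pair (a, b ⊓ ζ)
    have hma : ∀ ρ, b ⊓ ζ < ρ → ρ ⊓ a ≠ ⊥ :=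
      ma_max hmodA hSUR ha.le hb.le hbmax hζmax
    have hamax2 : ∀ ρ, a < ρ → ρ ⊓ (b ⊓ ζ) ≠ ⊥ := by
      intro ρ hρ hcon
      have h1 : ρ ⊓ b ≠ ξ := fun h => hamax ρ hρ h
      have h2 : ξ ≤ ρ ⊓ b := le_inf (le_trans ha.le hρ.le) hb.le
      have h3 : ξ < ρ ⊓ b := lt_of_le_of_ne h2 (Ne.symm h1)
      refine hξmax _ h3 ?_
      rw [inf_assoc]
      exact hcon
    have hmeet2 : a ⊓ (b ⊓ ζ) = ⊥ := by
      rw [← inf_assoc, hab]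
      exact hξζbot
    have hma' : ∀ ρ, b ⊓ ζ < ρ → ρ ⊓ a ≠ ⊥ := hma
    have hSURa : ∀ u v, ∃ w, a.r w u ∧ (b ⊓ ζ).r w v :=
      binary_decomp ⟨hV.1, hV.2⟩ hA har a (b ⊓ ζ) hmeet2 hamax2 hma'
    -- the pair (b, a ⊓ ζ)
    have hmb : ∀ ρ, a ⊓ ζ < ρ → ρ ⊓ b ≠ ⊥ := by
      refine ma_max hmodA hSUR hb.le ha.le ?_ hζmax
      intro ρ hρ h
      refine hamax ρ hρ ?_
      rw [inf_comm]
      exact h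
    have hbmax2 : ∀ ρ, b < ρ → ρ ⊓ (a ⊓ ζ) ≠ ⊥ := by
      intro ρ hρ hcon
      have h1 : ρ ⊓ a ≠ ξ := by
        intro h
        refine hbmax ρ hρ ?_
        rw [inf_comm]
        exact h
      have h2 : ξ ≤ ρ ⊓ a := le_inf (le_trans hb.le hρ.le) ha.le
      have h3 : ξ < ρ ⊓ a := lt_of_le_of_ne h2 (Ne.symm h1)
      refine hξmax _ h3 ?_
      rw [inf_assoc]
      exact hcon
    have hmeet2' : b ⊓ (a ⊓ ζ) = ⊥ := by
      rw [← inf_assoc, inf_comm b a, hab]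
      exact hξζbot
    have hSURb : ∀ u v, ∃ w, b.r w u ∧ (a ⊓ ζ).r w v :=
      binary_decomp ⟨hV.1, hV.2⟩ hA har b (a ⊓ ζ) hmeet2' hbmax2 hmb
    -- recursive calls
    have hatop : a ≠ ⊤ := by
      intro h
      rw [h, top_inf_eq] at hab
      exact absurd hab.symm (ne_of_lt hb)
    have hbtop : b ≠ ⊤ := by
      intro h
      rw [h, inf_top_eq] at hab
      exact absurd hab.symm (ne_of_lt ha)
    have hIJa : ∀ x y, a.r x y → (b ⊓ ζ).r x y → x = y := by
      intro x y h1 h2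
      rw [inf_r_iff] at h2
      have h3 : (a ⊓ b).r x y := (inf_r_iff _ _ _ _).2 ⟨h1, h2.1⟩
      rw [hab] at h3
      exact hIJ x y h3 h2.2
    have hIJb : ∀ x y, b.r x y → (a ⊓ ζ).r x y → x = y := by
      intro x y h1 h2
      rw [inf_r_iff] at h2
      have h3 : (a ⊓ b).r x y := (inf_r_iff _ _ _ _).2 ⟨h2.1, h1⟩
      rw [hab] at h3
      exact hIJ x y h3 h2.2
    obtain ⟨m₁, c₁, hc₁ξ, hc₁SI, hc₁meet, hc₁SUR⟩ := IH a ha (b ⊓ ζ) hatop hIJa hSURa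
    obtain ⟨m₂, c₂, hc₂ξ, hc₂SI, hc₂meet, hc₂SUR⟩ := IH b hb (a ⊓ ζ) hbtop hIJb hSURb
    refine ⟨m₁ + m₂, Fin.append c₁ c₂, ?_, ?_, ?_, ?_⟩
    · intro i
      refine Fin.addCases (fun j => ?_) (fun j => ?_) i
      · rw [Fin.append_left]
        exact le_trans ha.le (hc₁ξ j)
      · rw [Fin.append_right]
        exact le_trans hb.le (hc₂ξ j)
    · intro i
      refine Fin.addCases (fun j => ?_) (fun j => ?_) i
      · rw [Fin.append_left]
        exact hc₁SI j
      · rw [Fin.append_right]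
        exact hc₂SI j
    · intro x y h
      have h₁ : ∀ j, (c₁ j).r x y := by
        intro j
        have := h (Fin.castAdd m₂ j)
        rwa [Fin.append_left] at this
      have h₂ : ∀ j, (c₂ j).r x y := by
        intro j
        have := h (Fin.natAdd m₁ j)
        rwa [Fin.append_right] at this
      have hax : a.r x y := hc₁meet x y h₁
      have hbx : b.r x y := hc₂meet x y h₂
      have : (a ⊓ b).r x y := (inf_r_iff _ _ _ _).2 ⟨hax, hbx⟩
      rwa [hab] at this
    · intro t z
      obtain ⟨z', hz'c₂, hz'aζ⟩ := hc₂SUR (fun j => t (Fin.natAdd m₁ j)) z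
      obtain ⟨w, hwc₁, hwbζ⟩ := hc₁SUR (fun j => t (Fin.castAdd m₂ j)) z'
      rw [inf_r_iff] at hz'aζ hwbζ
      refine ⟨w, ?_, ζ.iseqv.trans hwbζ.2 hz'aζ.2⟩
      intro i
      refine Fin.addCases (fun j => ?_) (fun j => ?_) i
      · rw [Fin.append_left]
        exact hwc₁ j
      · rw [Fin.append_right]
        have h1 : (c₂ j).r w z' := (hc₂ξ j) _ _ hwbζ.1
        exact (c₂ j).iseqv.trans h1 (hz'c₂ j)

end ARsi

end AuxiliaryLemmas

/-- An absolute retract in a congruence modular variety whose congruence lattice has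
finite height is a finite product of subdirectly irreducible algebras. -/
theorem AR_finite_height_product_of_SI {S : Signature}
    (V : SAlgebra S → Prop) (hV : IsCongruenceModularVariety V)
    (A : SAlgebra S) (hA : V A) (har : IsAbsoluteRetract V A)
    (hfd : ∃ N : ℕ, ∀ l : List (SCon A), l.Chain' (· < ·) → l.length ≤ N) :
    ∃ (n : ℕ) (B : Fin n → SAlgebra S) (f : SHom A (SAlgebra.pi B)),
      Function.Bijective f.toFun ∧ ∀ i, IsSubdirectlyIrreducible (B i) := by
  classical
  obtain ⟨N, hN⟩ := hfd
  by_cases hsub : ∀ x y : A.carrier, x = y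
  · -- the trivial (one-element) case
    have hVT : V (SAlgebra.pi (fun i : Empty => (i.elim : SAlgebra S))) :=
      hV.1.2.2 Empty _ (fun i => i.elim)
    have e₀ : SHom A (SAlgebra.pi (fun i : Empty => (i.elim : SAlgebra S))) :=
      ⟨fun _ => fun i => i.elim, fun o x => funext fun i => i.elim⟩
    obtain ⟨p, hp⟩ := har _ hVT e₀ (fun a b _ => hsub a b)
    refine ⟨0, fun _ => A, ⟨fun _ => fun i => i.elim0, fun o x => funext fun i => i.elim0⟩,
      ⟨?_, ?_⟩, fun i => i.elim0⟩
    · intro a b _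
      exact hsub a b
    · intro t
      exact ⟨p.toFun (fun i => i.elim), funext fun i => i.elim0⟩
  · push_neg at hsub
    obtain ⟨x₀, y₀, hxy₀⟩ := hsub
    have hbotne : (⊥ : SCon A) ≠ ⊤ := by
      intro h
      exact hxy₀ ((ARsi.bot_r_iff x₀ y₀).1 (h ▸ ARsi.top_r x₀ y₀))
    obtain ⟨m, c, hcξ, hcSI, hcmeet, hcSUR⟩ :=
      ARsi.decomp_rec hV hA har hN ⊥ ⊤ hbotne
        (fun x y h _ => (ARsi.bot_r_iff x y).1 h)
        (fun u v => ⟨u, (⊥ : SCon A).iseqv.refl u, ARsi.top_r u v⟩)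
    refine ⟨m, fun i => A.quot (c i),
      ⟨fun a => fun i => Quotient.mk (c i).setoid a, ?_⟩, ⟨?_, ?_⟩, ?_⟩
    · intro o x
      funext i
      exact (SHom.quotHom A (c i)).map o x
    · intro x y h
      have h1 : ∀ i, (c i).r x y := fun i =>
        (ARsi.mk_eq_iff (c i) x y).1 (congrFun h i)
      exact (ARsi.bot_r_iff x y).1 (hcmeet x y h1)
    · intro t
      obtain ⟨w, hw, _⟩ := hcSUR (fun i => (t i).out) x₀
      refine ⟨w, funext fun i => ?_⟩
      have h1 : Quotient.mk (c i).setoid w = Quotient.mk (c i).setoid (t i).out :=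
        (ARsi.mk_eq_iff (c i) _ _).2 (hw i)
      show Quotient.mk (c i).setoid w = t i
      rw [h1, @Quotient.out_eq _ (c i).setoid (t i)]
    · intro i
      exact ARsi.SI_quot (hcSI i)
end

section
/- Let A be an absolute retract in a congruence modular variety satisfying the commutator identity (C1): α ∧ [β,β] = [α ∧ β, β]. Then A is isomorphic to the product of a centerless algebra and an abelian algebra. In particular, if A is also directly indecomposable, then A is either centerless or abelian. -/
set_option maxHeartbeats 1000000

open Relation

section Basics

variable {S : Signature} {A : SAlgebra S}

/-- the equality congruence -/
def eqCon (A : SAlgebra S) : SCon A where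
  r x y := x = y
  iseqv := ⟨fun _ => rfl, Eq.symm, Eq.trans⟩
  compat o x y h := by rw [funext h]

/-- the full congruence -/
def allCon (A : SAlgebra S) : SCon A where
  r _ _ := True
  iseqv := ⟨fun _ => trivial, fun _ => trivial, fun _ _ => trivial⟩
  compat _ _ _ _ := trivial

lemma SCon.le_iff {c d : SCon A} : c ≤ d ↔ ∀ x y, c.r x y → d.r x y := Iff.rfl

lemma top_r (x y : A.carrier) : (⊤ : SCon A).r x y :=
  SCon.le_iff.mp (le_top : allCon A ≤ ⊤) x y trivial

lemma bot_r_iff {x y : A.carrier} : (⊥ : SCon A).r x y ↔ x = y :=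
  ⟨fun h => SCon.le_iff.mp (bot_le : (⊥ : SCon A) ≤ eqCon A) x y h,
   fun h => h ▸ (⊥ : SCon A).iseqv.refl x⟩

/-- explicit meet -/
def infCon (c d : SCon A) : SCon A where
  r x y := c.r x y ∧ d.r x y
  iseqv := ⟨fun x => ⟨c.iseqv.refl x, d.iseqv.refl x⟩,
    fun h => ⟨c.iseqv.symm h.1, d.iseqv.symm h.2⟩,
    fun h h' => ⟨c.iseqv.trans h.1 h'.1, d.iseqv.trans h.2 h'.2⟩⟩
  compat o x y h := ⟨c.compat o x y fun i => (h i).1, d.compat o x y fun i => (h i).2⟩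

lemma inf_eq_infCon (c d : SCon A) : c ⊓ d = infCon c d := by
  apply le_antisymm
  · exact fun x y h => ⟨SCon.le_iff.mp inf_le_left x y h, SCon.le_iff.mp inf_le_right x y h⟩
  · exact le_inf (fun x y h => h.1) (fun x y h => h.2)

lemma inf_r_iff {c d : SCon A} {x y} : (c ⊓ d).r x y ↔ c.r x y ∧ d.r x y := by
  rw [inf_eq_infCon]; exact Iff.rfl

lemma sInf_r_iff {s : Set (SCon A)} {x y} : (sInf s).r x y ↔ ∀ c ∈ s, c.r x y := Iff.rfl

lemma comap_r {B : SAlgebra S} (f : SHom A B) (θ : SCon B) {x y} :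
    (SCon.comap f θ).r x y ↔ θ.r (f.toFun x) (f.toFun y) := Iff.rfl

/-- kernel of a homomorphism -/
def kerCon {B : SAlgebra S} (f : SHom A B) : SCon A where
  r x y := f.toFun x = f.toFun y
  iseqv := ⟨fun _ => rfl, Eq.symm, Eq.trans⟩
  compat o x y h := by
    show f.toFun (A.interp o x) = f.toFun (A.interp o y)
    rw [f.map, f.map]; exact congrArg _ (funext h)

lemma evalCompat (θ : SCon A) {n : ℕ} (t : STerm S n)
    {x y : Fin n → A.carrier} (h : ∀ i, θ.r (x i) (y i)) :
    θ.r (t.eval A x) (t.eval A y) := by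
  induction t with
  | var i => exact h i
  | app o ts ih => exact θ.compat o _ _ fun j => ih j

lemma hom_eval {B : SAlgebra S} (f : SHom A B) {n} (t : STerm S n) (x : Fin n → A.carrier) :
    f.toFun (t.eval A x) = t.eval B (fun i => f.toFun (x i)) := by
  induction t with
  | var i => rfl
  | app o ts ih =>
      show f.toFun (A.interp o _) = B.interp o _
      rw [f.map]
      exact congrArg _ (funext fun j => ih j)

lemma comp_append' {γ γ' : Type} (f : γ → γ') {n m : ℕ} (a : Fin n → γ) (u : Fin m → γ) :
    (fun k => f (Fin.append a u k)) = Fin.append (fun i => f (a i)) (fun j => f (u j)) := by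
  funext k
  refine Fin.addCases (motive := fun k => f (Fin.append a u k) =
    Fin.append (fun i => f (a i)) (fun j => f (u j)) k) (fun i => ?_) (fun j => ?_) k
  · simp only [Fin.append_left]
  · simp only [Fin.append_right]

lemma append_rel {α : SCon A} {n m} {a b : Fin n → A.carrier} {u v : Fin m → A.carrier}
    (h1 : ∀ i, α.r (a i) (b i)) (h2 : ∀ j, α.r (u j) (v j)) :
    ∀ k, α.r (Fin.append a u k) (Fin.append b v k) := fun k => by
  refine Fin.addCases (motive := fun k => α.r (Fin.append a u k) (Fin.append b v k))
    (fun i => ?_) (fun j => ?_) k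
  · simp only [Fin.append_left]; exact h1 i
  · simp only [Fin.append_right]; exact h2 j

end Basics

section Chains

variable {S : Signature} {A : SAlgebra S}

/-- single-coordinate step relation on tuples -/
def TupStep {γ : Type} (R : γ → γ → Prop) {n : ℕ} (T T' : Fin n → γ) : Prop :=
  ∃ i, R (T i) (T' i) ∧ ∀ j, j ≠ i → T j = T' j

lemma rtg_update {γ : Type} {R : γ → γ → Prop} {a b : γ} (h : ReflTransGen R a b)
    {n : ℕ} (T : Fin n → γ) (i : Fin n) :
    ReflTransGen (TupStep R) (Function.update T i a) (Function.update T i b) := by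
  induction h with
  | refl => exact .refl
  | tail _ hcd ih =>
      refine ih.tail ⟨i, ?_, ?_⟩
      · simpa using hcd
      · intro j hj; simp [Function.update_of_ne hj]

private def mixFun {γ : Type} {n : ℕ} (x y : Fin n → γ) (k : ℕ) : Fin n → γ :=
  fun i => if (i : ℕ) < k then y i else x i

lemma tuple_chain {γ : Type} {R : γ → γ → Prop} {n : ℕ} {x y : Fin n → γ}
    (h : ∀ i, ReflTransGen R (x i) (y i)) :
    ReflTransGen (TupStep R) x y := by
  have key : ∀ k, k ≤ n → ReflTransGen (TupStep R) x (mixFun x y k) := by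
    intro k
    induction k with
    | zero =>
        intro _
        have e : mixFun x y 0 = x := funext fun i => by simp [mixFun]
        rw [e]
    | succ k ih =>
        intro hk
        have hk' : k < n := hk
        refine (ih (le_of_lt hk')).trans ?_
        have e1 : mixFun x y k = Function.update (mixFun x y k) ⟨k, hk'⟩ (x ⟨k, hk'⟩) := by
          funext j
          rcases eq_or_ne j ⟨k, hk'⟩ with rfl | hj
          · simp [mixFun]
          · simp [Function.update_of_ne hj]
        have e2 : mixFun x y (k+1) = Function.update (mixFun x y k) ⟨k, hk'⟩ (y ⟨k, hk'⟩) := by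
          funext j
          rcases eq_or_ne j ⟨k, hk'⟩ with rfl | hj
          · simp [mixFun]
          · have hjk : (j : ℕ) ≠ k := fun hh => hj (Fin.ext hh)
            rw [Function.update_of_ne hj]
            show (if (j:ℕ) < k + 1 then y j else x j) = _
            by_cases hlt : (j:ℕ) < k
            · rw [if_pos (by omega)]; simp [mixFun, if_pos hlt]
            · rw [if_neg (by omega)]; simp [mixFun, if_neg hlt]
        rw [e2]
        nth_rewrite 1 [e1]
        exact rtg_update (h ⟨k, hk'⟩) _ _
  have e3 : mixFun x y n = y := funext fun i => by simp [mixFun, i.isLt]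
  have := key n le_rfl
  rwa [e3] at this

/-- chain-generated congruence from a single-coordinate-compatible relation -/
def chainCon (A : SAlgebra S) (R : A.carrier → A.carrier → Prop)
    (hrefl : ∀ x, R x x) (hsymm : ∀ {x y}, R x y → R y x)
    (hcompat1 : ∀ (o : S.ops) (x : Fin (S.arity o) → A.carrier) (i : Fin (S.arity o)) (a b : A.carrier),
      R a b → R (A.interp o (Function.update x i a)) (A.interp o (Function.update x i b))) :
    SCon A where
  r := ReflTransGen R
  iseqv := by
    refine ⟨fun x => .refl, ?_, fun h h' => h.trans h'⟩
    · intro x y h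
      induction h with
      | refl => exact .refl
      | tail _ hab ih => exact ReflTransGen.head (hsymm hab) ih
  compat o x y h := by
    have h1 : ReflTransGen (TupStep R) x y := tuple_chain h
    clear h
    induction h1 with
    | refl => exact .refl
    | @tail T T' _ hstep ih =>
        obtain ⟨i, hR, heq⟩ := hstep
        refine ih.tail ?_
        have e1 : T = Function.update T i (T i) := (Function.update_eq_self i T).symm
        have e2 : T' = Function.update T i (T' i) := by
          funext j
          rcases eq_or_ne j i with rfl | hj
          · simp
          · rw [Function.update_of_ne hj]; exact (heq j hj).symm
        rw [e2]
        nth_rewrite 1 [e1]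
        exact hcompat1 o T i (T i) (T' i) hR

/-- chain description of sSup -/
def sSupCon (s : Set (SCon A)) (hne : s.Nonempty) : SCon A :=
  chainCon A (fun a b => ∃ θ ∈ s, θ.r a b)
    (fun x => ⟨hne.choose, hne.choose_spec, hne.choose.iseqv.refl x⟩)
    (fun h => ⟨h.choose, h.choose_spec.1, h.choose.iseqv.symm h.choose_spec.2⟩)
    (by
      rintro o x i a b ⟨θ, hθ, hab⟩
      refine ⟨θ, hθ, θ.compat o _ _ fun j => ?_⟩
      rcases eq_or_ne j i with rfl | hj
      · simpa using hab
      · simp [Function.update_of_ne hj, θ.iseqv.refl])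

lemma sSupCon_eq (s : Set (SCon A)) (hne : s.Nonempty) : sSup s = sSupCon s hne := by
  apply le_antisymm
  · exact sSup_le fun θ hθ => fun x y h => ReflTransGen.single ⟨θ, hθ, h⟩
  · intro x y h
    induction h with
    | refl => exact (sSup s).iseqv.refl x
    | tail _ hstep ih =>
        obtain ⟨θ, hθ, hst⟩ := hstep
        exact (sSup s).iseqv.trans ih (SCon.le_iff.mp (le_sSup hθ) _ _ hst)

lemma sSup_r_iff {s : Set (SCon A)} (hne : s.Nonempty) {x y} :
    (sSup s).r x y ↔ ReflTransGen (fun a b => ∃ θ ∈ s, θ.r a b) x y := by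
  rw [sSupCon_eq s hne]; exact Iff.rfl

lemma sup_r_iff {c d : SCon A} {x y} :
    (c ⊔ d).r x y ↔ ReflTransGen (fun a b => c.r a b ∨ d.r a b) x y := by
  have h1 : c ⊔ d = sSup {c, d} := (sSup_pair).symm
  rw [h1, sSup_r_iff ⟨c, by simp⟩]
  constructor
  · intro h
    induction h with
    | refl => exact .refl
    | tail _ hstep ih =>
        refine ih.tail ?_
        obtain ⟨θ, hθ, hst⟩ := hstep
        rcases hθ with rfl | hθ
        · exact Or.inl hst
        · exact Or.inr (by rwa [Set.mem_singleton_iff.mp hθ] at hst)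
  · intro h
    induction h with
    | refl => exact .refl
    | tail _ hstep ih =>
        refine ih.tail ?_
        rcases hstep with hst | hst
        · exact ⟨c, by simp, hst⟩
        · exact ⟨d, by simp, hst⟩

lemma r_sup_of_r_left {c d : SCon A} {x y} (h : c.r x y) : (c ⊔ d).r x y :=
  SCon.le_iff.mp le_sup_left x y h

lemma r_sup_of_r_right {c d : SCon A} {x y} (h : d.r x y) : (c ⊔ d).r x y :=
  SCon.le_iff.mp le_sup_right x y h

end Chains

section Cent

variable {S : Signature} {A : SAlgebra S}

lemma centralizes_mono {α' α β' β δ : SCon A} (h : Centralizes A α β δ)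
    (h1 : α' ≤ α) (h2 : β' ≤ β) : Centralizes A α' β' δ :=
  fun n m t a b u v hab huv hp =>
    h n m t a b u v (fun i => SCon.le_iff.mp h1 _ _ (hab i)) (fun j => SCon.le_iff.mp h2 _ _ (huv j)) hp

lemma centralizes_self_right {α β : SCon A} : Centralizes A α β β := by
  intro n m t a b u v hab huv hp
  exact evalCompat β t (append_rel (fun i => β.iseqv.refl (b i)) huv)

lemma centralizes_self_left {α β : SCon A} : Centralizes A α β α := by
  intro n m t a b u v hab huv hp
  have h1 : α.r (t.eval A (Fin.append b u)) (t.eval A (Fin.append a u)) :=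
    evalCompat α t (append_rel (fun i => α.iseqv.symm (hab i)) (fun j => α.iseqv.refl (u j)))
  have h2 : α.r (t.eval A (Fin.append a v)) (t.eval A (Fin.append b v)) :=
    evalCompat α t (append_rel hab (fun j => α.iseqv.refl (v j)))
  exact α.iseqv.trans h1 (α.iseqv.trans hp h2)

lemma centralizes_commutator (α β : SCon A) : Centralizes A α β (conCommutator A α β) := by
  intro n m t a b u v hab huv hp
  intro c hc
  exact hc n m t a b u v hab huv (hp c hc)

lemma commutator_le {α β δ : SCon A} (h : Centralizes A α β δ) : conCommutator A α β ≤ δ :=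
  sInf_le h

lemma commutator_r {α β : SCon A} {x y} (h : (conCommutator A α β).r x y)
    {δ : SCon A} (hδ : Centralizes A α β δ) : δ.r x y := h δ hδ

lemma centralizes_of_commutator_eq_bot {α β : SCon A} (h : conCommutator A α β = ⊥) :
    Centralizes A α β ⊥ := h ▸ centralizes_commutator α β

lemma commutator_mono {α' α β' β : SCon A} (h1 : α' ≤ α) (h2 : β' ≤ β) :
    conCommutator A α' β' ≤ conCommutator A α β :=
  commutator_le (centralizes_mono (centralizes_commutator α β) h1 h2)

lemma centralizes_pullback {B : SAlgebra S} (f : SHom A B) {α β δ : SCon B}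
    (h : Centralizes B α β δ) :
    Centralizes A (SCon.comap f α) (SCon.comap f β) (SCon.comap f δ) := by
  intro n m t a b u v hab huv hp
  have key : ∀ (w : Fin (n+m) → A.carrier),
      f.toFun (t.eval A w) = t.eval B (fun k => f.toFun (w k)) := fun w => hom_eval f t w
  have hp' : δ.r (t.eval B (Fin.append (fun i => f.toFun (a i)) (fun j => f.toFun (u j))))
      (t.eval B (Fin.append (fun i => f.toFun (a i)) (fun j => f.toFun (v j)))) := by
    have h0 : δ.r (f.toFun (t.eval A (Fin.append a u))) (f.toFun (t.eval A (Fin.append a v))) := hp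
    rwa [key, key, comp_append' f.toFun a u, comp_append' f.toFun a v] at h0
  have hc := h n m t _ _ _ _ (fun i => hab i) (fun j => huv j) hp'
  show δ.r (f.toFun (t.eval A (Fin.append b u))) (f.toFun (t.eval A (Fin.append b v)))
  rw [key, key, comp_append' f.toFun b u, comp_append' f.toFun b v]
  exact hc

/-- master chain-transfer lemma for the term condition in the first argument -/
lemma centralizes_chain_first {R : A.carrier → A.carrier → Prop} {β δ : SCon A}
    (H : ∀ c d, R c d → ∀ (n m : ℕ) (t : STerm S (n+m)) (x : Fin n → A.carrier) (i : Fin n)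
      (u v : Fin m → A.carrier), (∀ j, β.r (u j) (v j)) →
      δ.r (t.eval A (Fin.append (Function.update x i c) u))
          (t.eval A (Fin.append (Function.update x i c) v)) →
      δ.r (t.eval A (Fin.append (Function.update x i d) u))
          (t.eval A (Fin.append (Function.update x i d) v)))
    (n m : ℕ) (t : STerm S (n+m)) (a b : Fin n → A.carrier) (u v : Fin m → A.carrier)
    (hab : ∀ i, ReflTransGen R (a i) (b i)) (huv : ∀ j, β.r (u j) (v j))
    (hp : δ.r (t.eval A (Fin.append a u)) (t.eval A (Fin.append a v))) :
    δ.r (t.eval A (Fin.append b u)) (t.eval A (Fin.append b v)) := by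
  have h1 : ReflTransGen (TupStep R) a b := tuple_chain hab
  clear hab
  induction h1 with
  | refl => exact hp
  | @tail T T' _ hstep ih =>
      obtain ⟨i, hR, heq⟩ := hstep
      have e1 : T = Function.update T i (T i) := (Function.update_eq_self i T).symm
      have e2 : T' = Function.update T i (T' i) := by
        funext j
        rcases eq_or_ne j i with rfl | hj
        · simp
        · rw [Function.update_of_ne hj]; exact (heq j hj).symm
      rw [e2]
      rw [e1] at ih
      exact H (T i) (T' i) hR n m t T i u v huv ih

lemma H_of_centralizes {θ β δ : SCon A} (hc : Centralizes A θ β δ) :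
    ∀ c d, θ.r c d → ∀ (n m : ℕ) (t : STerm S (n+m)) (x : Fin n → A.carrier) (i : Fin n)
      (u v : Fin m → A.carrier), (∀ j, β.r (u j) (v j)) →
      δ.r (t.eval A (Fin.append (Function.update x i c) u))
          (t.eval A (Fin.append (Function.update x i c) v)) →
      δ.r (t.eval A (Fin.append (Function.update x i d) u))
          (t.eval A (Fin.append (Function.update x i d) v)) := by
  intro c d hcd n m t x i u v huv hp
  refine hc n m t _ _ u v (fun j => ?_) huv hp
  rcases eq_or_ne j i with rfl | hj
  · simpa using hcd
  · simp only [Function.update_of_ne hj]; exact θ.iseqv.refl (x j)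

lemma centralizes_sSup {s : Set (SCon A)} (hne : s.Nonempty) {β δ : SCon A}
    (h : ∀ θ ∈ s, Centralizes A θ β δ) : Centralizes A (sSup s) β δ := by
  intro n m t a b u v hab huv hp
  refine centralizes_chain_first (R := fun a b => ∃ θ ∈ s, θ.r a b) ?_ n m t a b u v
    (fun i => (sSup_r_iff hne).mp (hab i)) huv hp
  rintro c d ⟨θ, hθ, hcd⟩
  exact H_of_centralizes (h θ hθ) c d hcd

lemma centralizes_sup {c d : SCon A} {β δ : SCon A}
    (h1 : Centralizes A c β δ) (h2 : Centralizes A d β δ) : Centralizes A (c ⊔ d) β δ := by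
  have : c ⊔ d = sSup {c, d} := (sSup_pair).symm
  rw [this]
  refine centralizes_sSup ⟨c, by simp⟩ ?_
  rintro θ (rfl | hθ)
  · exact h1
  · rwa [Set.mem_singleton_iff.mp hθ]

end Cent

section GenCon

variable {S : Signature}

def STerm.rename {n N : ℕ} (ρ : Fin n → Fin N) : STerm S n → STerm S N
  | .var i => .var (ρ i)
  | .app o ts => .app o (fun j => STerm.rename ρ (ts j))

lemma eval_rename {W : SAlgebra S} {n N : ℕ} (ρ : Fin n → Fin N) (t : STerm S n)
    (x : Fin N → W.carrier) :
    (STerm.rename ρ t).eval W x = t.eval W (fun i => x (ρ i)) := by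
  induction t with
  | var i => rfl
  | app o ts ih =>
      simp only [STerm.rename, STerm.eval]
      exact congrArg _ (funext fun j => ih j)

variable {V W : SAlgebra S}

/-- one polynomial-translation step of the congruence generated by `{(f u, f v) : ε.r u v}` -/
def GenStep (f : SHom V W) (ε : SCon V) (w w' : W.carrier) : Prop :=
  ∃ (n : ℕ) (t : STerm S n) (x y : Fin n → W.carrier),
    w = t.eval W x ∧ w' = t.eval W y ∧
    ∀ i, x i = y i ∨ ∃ u v, ε.r u v ∧ x i = f.toFun u ∧ y i = f.toFun v

lemma genStep_refl (f : SHom V W) (ε : SCon V) (w : W.carrier) : GenStep f ε w w :=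
  ⟨1, .var 0, fun _ => w, fun _ => w, rfl, rfl, fun _ => Or.inl rfl⟩

lemma genStep_symm {f : SHom V W} {ε : SCon V} {w w' : W.carrier}
    (h : GenStep f ε w w') : GenStep f ε w' w := by
  obtain ⟨n, t, x, y, hx, hy, hc⟩ := h
  refine ⟨n, t, y, x, hy, hx, fun i => ?_⟩
  rcases hc i with h | ⟨u, v, h1, h2, h3⟩
  · exact Or.inl h.symm
  · exact Or.inr ⟨v, u, ε.iseqv.symm h1, h3, h2⟩

lemma genStep_compat1 (f : SHom V W) (ε : SCon V) (o : S.ops)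
    (x : Fin (S.arity o) → W.carrier) (i : Fin (S.arity o)) (a b : W.carrier)
    (h : GenStep f ε a b) :
    GenStep f ε (W.interp o (Function.update x i a)) (W.interp o (Function.update x i b)) := by
  classical
  obtain ⟨n, t, xx, yy, ha, hb, hcond⟩ := h
  refine ⟨n + S.arity o,
    STerm.app o (fun j => if j = i then STerm.rename (Fin.castAdd (S.arity o)) t
      else STerm.var (Fin.natAdd n j)),
    Fin.append xx x, Fin.append yy x, ?_, ?_, ?_⟩
  · show W.interp o (Function.update x i a) = W.interp o _
    refine congrArg _ (funext fun j => ?_)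
    show Function.update x i a j = STerm.eval W (if j = i then STerm.rename (Fin.castAdd (S.arity o)) t
      else STerm.var (Fin.natAdd n j)) (Fin.append xx x)
    rcases eq_or_ne j i with rfl | hj
    · rw [if_pos rfl, Function.update_self]
      show a = (STerm.rename (Fin.castAdd (S.arity o)) t).eval W (Fin.append xx x)
      rw [eval_rename, ha]
      exact congrArg _ (funext fun i' => (Fin.append_left xx x i').symm)
    · rw [if_neg hj, Function.update_of_ne hj]
      show x j = Fin.append xx x (Fin.natAdd n j)
      rw [Fin.append_right]
  · show W.interp o (Function.update x i b) = W.interp o _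
    refine congrArg _ (funext fun j => ?_)
    show Function.update x i b j = STerm.eval W (if j = i then STerm.rename (Fin.castAdd (S.arity o)) t
      else STerm.var (Fin.natAdd n j)) (Fin.append yy x)
    rcases eq_or_ne j i with rfl | hj
    · rw [if_pos rfl, Function.update_self]
      show b = (STerm.rename (Fin.castAdd (S.arity o)) t).eval W (Fin.append yy x)
      rw [eval_rename, hb]
      exact congrArg _ (funext fun i' => (Fin.append_left yy x i').symm)
    · rw [if_neg hj, Function.update_of_ne hj]
      show x j = Fin.append yy x (Fin.natAdd n j)
      rw [Fin.append_right]
  · intro k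
    refine Fin.addCases (motive := fun k => Fin.append xx x k = Fin.append yy x k ∨
      ∃ u v, ε.r u v ∧ Fin.append xx x k = f.toFun u ∧ Fin.append yy x k = f.toFun v)
      (fun i' => ?_) (fun j => ?_) k
    · simp only [Fin.append_left]; exact hcond i'
    · exact Or.inl (by simp only [Fin.append_right])

/-- the congruence generated by `{(f u, f v) : ε.r u v}` -/
def genCon (f : SHom V W) (ε : SCon V) : SCon W :=
  chainCon W (GenStep f ε) (genStep_refl f ε) (fun h => genStep_symm h)
    (genStep_compat1 f ε)

lemma genCon_r_gen {f : SHom V W} {ε : SCon V} {u v : V.carrier} (h : ε.r u v) :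
    (genCon f ε).r (f.toFun u) (f.toFun v) :=
  ReflTransGen.single ⟨1, .var 0, fun _ => f.toFun u, fun _ => f.toFun v, rfl, rfl,
    fun _ => Or.inr ⟨u, v, h, rfl, rfl⟩⟩

lemma genCon_r_step {f : SHom V W} {ε : SCon V} {n : ℕ} (t : STerm S n)
    {x y : Fin n → W.carrier}
    (h : ∀ i, x i = y i ∨ ∃ u v, ε.r u v ∧ x i = f.toFun u ∧ y i = f.toFun v) :
    (genCon f ε).r (t.eval W x) (t.eval W y) :=
  ReflTransGen.single ⟨n, t, x, y, rfl, rfl, h⟩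

lemma genCon_le {f : SHom V W} {ε : SCon V} {θ : SCon W}
    (hθ : ∀ u v, ε.r u v → θ.r (f.toFun u) (f.toFun v)) : genCon f ε ≤ θ := by
  intro w w' h
  induction h with
  | refl => exact θ.iseqv.refl w
  | tail _ hstep ih =>
      refine θ.iseqv.trans ih ?_
      obtain ⟨n, t, x, y, hx, hy, hc⟩ := hstep
      rw [hx, hy]
      refine evalCompat θ t fun i => ?_
      rcases hc i with h | ⟨u, v, h1, h2, h3⟩
      · exact h ▸ θ.iseqv.refl (x i)
      · rw [h2, h3]; exact hθ u v h1

end GenCon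

section Mix

variable {S : Signature} {A : SAlgebra S}

/-- the term condition with interleaved variables -/
lemma centralizes_mix {α β δ : SCon A} (h : Centralizes A α β δ)
    {N : ℕ} (t : STerm S N) (X Y X' Y' : Fin N → A.carrier)
    (hc : ∀ i, (X i = Y i ∧ X' i = Y' i ∧ α.r (X i) (X' i)) ∨
               (X i = X' i ∧ Y i = Y' i ∧ β.r (X i) (Y i)))
    (hp : δ.r (t.eval A X) (t.eval A Y)) : δ.r (t.eval A X') (t.eval A Y') := by
  classical
  let sel : Fin N → Prop := fun i => X i = Y i ∧ X' i = Y' i ∧ α.r (X i) (X' i)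
  let σ : Fin N → Fin (N + N) := fun i => if sel i then Fin.castAdd N i else Fin.natAdd N i
  have key : ∀ (aT uT : Fin N → A.carrier),
      (STerm.rename σ t).eval A (Fin.append aT uT)
        = t.eval A (fun i => if sel i then aT i else uT i) := by
    intro aT uT; rw [eval_rename]
    refine congrArg _ (funext fun i => ?_)
    by_cases hs : sel i
    · simp only [σ, if_pos hs, Fin.append_left]
    · simp only [σ, if_neg hs, Fin.append_right]
  have hα : ∀ i, α.r (X i) (X' i) := fun i => by
    rcases hc i with ⟨_, _, h3⟩ | ⟨h1, _, _⟩
    · exact h3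
    · exact h1 ▸ α.iseqv.refl (X i)
  have hβ : ∀ j, β.r (X j) (Y j) := fun j => by
    rcases hc j with ⟨h1, _, _⟩ | ⟨_, _, h3⟩
    · exact h1 ▸ β.iseqv.refl (X j)
    · exact h3
  have hpre : δ.r ((STerm.rename σ t).eval A (Fin.append X X))
      ((STerm.rename σ t).eval A (Fin.append X Y)) := by
    rw [key, key]
    have e3 : (fun i => if sel i then X i else X i) = X :=
      funext fun i => by by_cases hs : sel i <;> simp [hs]
    have e4 : (fun i => if sel i then X i else Y i) = Y := funext fun i => by
      by_cases hs : sel i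
      · rw [if_pos hs]; exact hs.1
      · rw [if_neg hs]
    rwa [e3, e4]
  have hfin := h N N (STerm.rename σ t) X X' X Y hα hβ hpre
  rw [key, key] at hfin
  have e1 : (fun i => if sel i then X' i else X i) = X' := funext fun i => by
    by_cases hs : sel i
    · rw [if_pos hs]
    · rw [if_neg hs]
      rcases hc i with hcase | ⟨h1, _, _⟩
      · exact absurd hcase hs
      · exact h1
  have e2 : (fun i => if sel i then X' i else Y i) = Y' := funext fun i => by
    by_cases hs : sel i
    · rw [if_pos hs]; exact hs.2.1
    · rw [if_neg hs]
      rcases hc i with hcase | ⟨_, h2, _⟩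
      · exact absurd hcase hs
      · exact h2
  rwa [e1, e2] at hfin

end Mix

section Plumb

variable {S : Signature}

def SHom.fst (A B : SAlgebra S) : SHom (A.prod B) A where
  toFun p := p.1
  map _ _ := rfl

def SHom.snd (A B : SAlgebra S) : SHom (A.prod B) B where
  toFun p := p.2
  map _ _ := rfl

def SHom.pair {X A B : SAlgebra S} (f : SHom X A) (g : SHom X B) : SHom X (A.prod B) where
  toFun x := (f.toFun x, g.toFun x)
  map o z := by
    show (f.toFun (X.interp o z), g.toFun (X.interp o z)) = _
    rw [f.map, g.map]; rfl

def SHom.idHom (A : SAlgebra S) : SHom A A := ⟨fun a => a, fun _ _ => rfl⟩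

def diagHom (A : SAlgebra S) : SHom A (A.prod A) := SHom.pair (SHom.idHom A) (SHom.idHom A)

lemma quotHom_surjective (A : SAlgebra S) (θ : SCon A) :
    Function.Surjective (SHom.quotHom A θ).toFun := fun z => ⟨z.out, Quotient.out_eq z⟩

lemma quotHom_r_iff {A : SAlgebra S} (θ : SCon A) {a b : A.carrier} :
    (SHom.quotHom A θ).toFun a = (SHom.quotHom A θ).toFun b ↔ θ.r a b :=
  ⟨fun h => @Quotient.exact _ θ.setoid _ _ h, fun h => Quotient.sound h⟩

lemma quot_out_mk {A : SAlgebra S} (θ : SCon A) (z : (A.quot θ).carrier) :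
    (SHom.quotHom A θ).toFun z.out = z := Quotient.out_eq z

lemma V_quot {V : SAlgebra S → Prop} (hv : IsVariety V) {A : SAlgebra S} (hA : V A)
    (θ : SCon A) : V (A.quot θ) :=
  hv.2.1 A _ (SHom.quotHom A θ) (quotHom_surjective A θ) hA

lemma V_prod {V : SAlgebra S → Prop} (hv : IsVariety V) {A B : SAlgebra S}
    (hA : V A) (hB : V B) : V (A.prod B) := by
  let F : Bool → SAlgebra S := fun b => cond b A B
  have hF : ∀ b, V (F b) := by intro b; cases b
    <;> [exact hB; exact hA]
  have hpi : V (SAlgebra.pi F) := hv.2.2 Bool F hF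
  let e : SHom (A.prod B) (SAlgebra.pi F) :=
    { toFun := fun p b => (match b with
        | true => p.1
        | false => p.2 : (F b).carrier)
      map := fun o z => funext fun b => by cases b <;> rfl }
  have hinj : Function.Injective e.toFun := by
    intro p p' h
    exact Prod.ext (congrFun h true) (congrFun h false)
  exact hv.1 _ _ e hinj hpi

noncomputable def invHom {A B : SAlgebra S} (f : SHom A B) (hf : Function.Bijective f.toFun) :
    SHom B A where
  toFun := Function.surjInv hf.2
  map o x := hf.1 (by
    rw [Function.surjInv_eq hf.2, f.map]
    exact congrArg _ (funext fun i => (Function.surjInv_eq hf.2 (x i)).symm))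

lemma invHom_left {A B : SAlgebra S} (f : SHom A B) (hf : Function.Bijective f.toFun)
    (a : A.carrier) : (invHom f hf).toFun (f.toFun a) = a :=
  Function.leftInverse_surjInv hf a

lemma invHom_right {A B : SAlgebra S} (f : SHom A B) (hf : Function.Bijective f.toFun)
    (b : B.carrier) : f.toFun ((invHom f hf).toFun b) = b :=
  Function.surjInv_eq hf.2 b

lemma scon_eq_of_subsingleton {A : SAlgebra S} (h : Subsingleton A.carrier)
    (c d : SCon A) : c = d := by
  obtain ⟨r1, e1, c1⟩ := c
  obtain ⟨r2, e2, c2⟩ := d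
  simp only [SCon.mk.injEq]
  funext x y
  have hxy : x = y := Subsingleton.elim x y
  subst hxy
  exact propext ⟨fun _ => e2.refl x, fun _ => e1.refl x⟩

end Plumb

section QuotTransfer

variable {S : Signature} {A : SAlgebra S}

lemma comp_quot_append {θ : SCon A} {n m : ℕ} (a' : Fin n → A.carrier) (u' : Fin m → A.carrier) :
    (fun k => (SHom.quotHom A θ).toFun (Fin.append a' u' k)) =
      Fin.append (fun i => (SHom.quotHom A θ).toFun (a' i)) (fun j => (SHom.quotHom A θ).toFun (u' j)) :=
  comp_append' _ a' u'

/-- abelianness passes to the quotient -/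
lemma centralizes_quot_top {ψ : SCon A} (h : Centralizes A ⊤ ⊤ ψ) :
    Centralizes (A.quot ψ) ⊤ ⊤ ⊥ := by
  intro n m t a b u v _ _ hp
  set q := SHom.quotHom A ψ with hqdef
  set a' : Fin n → A.carrier := fun i => (a i).out
  set b' : Fin n → A.carrier := fun i => (b i).out
  set u' : Fin m → A.carrier := fun j => (u j).out
  set v' : Fin m → A.carrier := fun j => (v j).out
  have qa : (fun i => q.toFun (a' i)) = a := funext fun i => quot_out_mk ψ (a i)
  have qb : (fun i => q.toFun (b' i)) = b := funext fun i => quot_out_mk ψ (b i)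
  have qu : (fun j => q.toFun (u' j)) = u := funext fun j => quot_out_mk ψ (u j)
  have qv : (fun j => q.toFun (v' j)) = v := funext fun j => quot_out_mk ψ (v j)
  have key : ∀ (x : Fin n → A.carrier) (w : Fin m → A.carrier),
      q.toFun (t.eval A (Fin.append x w)) =
        t.eval (A.quot ψ) (Fin.append (fun i => q.toFun (x i)) (fun j => q.toFun (w j))) := by
    intro x w
    rw [hom_eval q t, comp_append' q.toFun]
  have hp' : ψ.r (t.eval A (Fin.append a' u')) (t.eval A (Fin.append a' v')) := by
    rw [← quotHom_r_iff ψ, key, key, qa, qu, qv]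
    exact bot_r_iff.mp hp
  have hc := h n m t a' b' u' v' (fun i => top_r _ _) (fun j => top_r _ _) hp'
  rw [bot_r_iff, ← qb, ← qu, ← qv, ← key, ← key]
  exact (quotHom_r_iff ψ).mpr hc

/-- a congruence of the quotient centralizing top pulls back to centralize modulo the kernel -/
lemma centralizes_comap_quot {ζ : SCon A} {θq : SCon (A.quot ζ)}
    (h : Centralizes (A.quot ζ) θq ⊤ ⊥) :
    Centralizes A (SCon.comap (SHom.quotHom A ζ) θq) ⊤ ζ := by
  intro n m t a b u v hab _ hp
  set q := SHom.quotHom A ζ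
  have key : ∀ (x : Fin n → A.carrier) (w : Fin m → A.carrier),
      q.toFun (t.eval A (Fin.append x w)) =
        t.eval (A.quot ζ) (Fin.append (fun i => q.toFun (x i)) (fun j => q.toFun (w j))) := by
    intro x w
    rw [hom_eval q t, comp_append' q.toFun]
  have hp' : t.eval (A.quot ζ) (Fin.append (fun i => q.toFun (a i)) (fun j => q.toFun (u j))) =
      t.eval (A.quot ζ) (Fin.append (fun i => q.toFun (a i)) (fun j => q.toFun (v j))) := by
    rw [← key, ← key]
    exact (quotHom_r_iff ζ).mpr hp
  have hc := h n m t (fun i => q.toFun (a i)) (fun i => q.toFun (b i))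
    (fun j => q.toFun (u j)) (fun j => q.toFun (v j))
    (fun i => hab i) (fun j => top_r _ _) (bot_r_iff.mpr hp')
  have := bot_r_iff.mp hc
  rw [← key, ← key] at this
  exact (quotHom_r_iff ζ).mp this

end QuotTransfer

section AbGoal2

variable {S : Signature} (C : SAlgebra S)

/-- the congruence on C × C generated by all pairs of diagonal elements -/
def diagCon : SCon (C.prod C) := genCon (diagHom C) (⊤ : SCon C)

variable {C}

lemma fst_eval {B : SAlgebra S} {n : ℕ} (t : STerm S n) (Z : Fin n → (C.prod B).carrier) :
    (t.eval (C.prod B) Z).1 = t.eval C (fun k => (Z k).1) :=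
  hom_eval (SHom.fst C B) t Z

lemma snd_eval {B : SAlgebra S} {n : ℕ} (t : STerm S n) (Z : Fin n → (B.prod C).carrier) :
    (t.eval (B.prod C) Z).2 = t.eval C (fun k => (Z k).2) :=
  hom_eval (SHom.snd B C) t Z

/-- in an abelian algebra, the diagonal is a union of classes of `diagCon` -/
lemma diagCon_diag_class (hab : Centralizes C ⊤ ⊤ ⊥)
    {w w' : (C.prod C).carrier} (h : (diagCon C).r w w') (hw : w.1 = w.2) :
    w'.1 = w'.2 := by
  induction h with
  | refl => exact hw
  | tail _ hstep ih =>
      obtain ⟨n, t, x, y, hx, hy, hcond⟩ := hstep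
      have hp : (⊥ : SCon C).r (t.eval C (fun i => (x i).1)) (t.eval C (fun i => (x i).2)) := by
        rw [bot_r_iff, ← fst_eval t x, ← snd_eval t x, ← hx]
        exact ih
      have hc := centralizes_mix hab t (fun i => (x i).1) (fun i => (x i).2)
        (fun i => (y i).1) (fun i => (y i).2) ?_ hp
      · rw [hy, fst_eval t y, snd_eval t y]
        exact bot_r_iff.mp hc
      · intro i
        rcases hcond i with hcase | ⟨u, v, _, hxu, hyv⟩
        · refine Or.inr ⟨?_, ?_, top_r _ _⟩
          · show (x i).1 = (y i).1; rw [hcase]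
          · show (x i).2 = (y i).2; rw [hcase]
        · refine Or.inl ⟨?_, ?_, top_r _ _⟩
          · show (x i).1 = (x i).2; rw [hxu]; rfl
          · show (y i).1 = (y i).2; rw [hyv]; rfl

/-- Goal-2 for abelian algebras: `diagCon` classes are graphs -/
lemma diagCon_graph (hab : Centralizes C ⊤ ⊤ ⊥)
    (hmod : IsModularLattice (SCon (C.prod C)))
    {x y y' : C.carrier} (h : (diagCon C).r (x, y) (x, y')) : y = y' := by
  set η1 : SCon (C.prod C) := kerCon (SHom.fst C C)
  set η2 : SCon (C.prod C) := kerCon (SHom.snd C C)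
  set G1 : SCon (C.prod C) := diagCon C ⊓ η1
  set G2 : SCon (C.prod C) := diagCon C ⊓ η2
  have hG1 : G1.r (x, y) (x, y') := inf_r_iff.mpr ⟨h, rfl⟩
  have key : (diagCon C ⊓ (η2 ⊔ G1)).r (y, y) (y', y') := by
    refine inf_r_iff.mpr ⟨?_, ?_⟩
    · exact genCon_r_gen (top_r y y')
    · have s1 : (η2 ⊔ G1).r (y, y) (x, y) := r_sup_of_r_left rfl
      have s2 : (η2 ⊔ G1).r (x, y) (x, y') := r_sup_of_r_right hG1
      have s3 : (η2 ⊔ G1).r (x, y') (y', y') := r_sup_of_r_left rfl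
      exact (η2 ⊔ G1).iseqv.trans (((η2 ⊔ G1)).iseqv.trans s1 s2) s3
  have hmodeq : diagCon C ⊓ (η2 ⊔ G1) = G1 ⊔ (η2 ⊓ diagCon C) := by
    rw [inf_comm, sup_comm]
    exact sup_inf_assoc_of_le η2 (inf_le_left : G1 ≤ diagCon C)
  rw [hmodeq] at key
  have hchain := sup_r_iff.mp key
  have inv : ∀ z : (C.prod C).carrier,
      Relation.ReflTransGen (fun a b => G1.r a b ∨ (η2 ⊓ diagCon C).r a b) (y, y) z →
      z = (y, y) := by
    intro z hz
    induction hz with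
    | refl => rfl
    | tail _ hstep ih =>
        subst ih
        rcases hstep with hst | hst
        · have h1 := inf_r_iff.mp hst
          have hd := diagCon_diag_class hab h1.1 rfl
          have he : y = _ := h1.2
          exact Prod.ext he.symm (by rw [← hd]; exact he.symm)
        · have h1 := inf_r_iff.mp hst
          have hd := diagCon_diag_class hab h1.2 rfl
          have he : y = _ := h1.1
          exact Prod.ext (by rw [hd]; exact he.symm) he.symm
  have := inv _ hchain
  have h1 : y' = y := congrArg Prod.fst this
  exact h1.symm

end AbGoal2

section WeaponOne

variable {S : Signature} {B C : SAlgebra S}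

/-- η₁ (the kernel of the first projection) strongly centralizes everything, provided
the second factor is abelian. -/
lemma weapon_one
    (habC : Centralizes C ⊤ ⊤ ⊥)
    (hmodCC : IsModularLattice (SCon (C.prod C)))
    (hmodD2 : IsModularLattice (SCon ((B.prod C).prod (B.prod C))))
    (δ : SCon (B.prod C)) :
    Centralizes (B.prod C) (kerCon (SHom.fst B C)) ⊤ δ := by
  haveI := hmodD2
  have bound1 : (genCon (diagHom (B.prod C)) (kerCon (SHom.fst B C))) ≤ kerCon (SHom.pair ((SHom.fst B C).comp (SHom.fst (B.prod C) (B.prod C)))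
      ((SHom.fst B C).comp (SHom.snd (B.prod C) (B.prod C)))) := by
    refine genCon_le ?_
    intro p q hpq
    show ((p.1, p.1) : B.carrier × B.carrier) = (q.1, q.1)
    have : p.1 = q.1 := hpq
    rw [this]
  have bound2 : (genCon (diagHom (B.prod C)) (kerCon (SHom.fst B C))) ≤ SCon.comap (SHom.pair ((SHom.snd B C).comp (SHom.fst (B.prod C) (B.prod C)))
      ((SHom.snd B C).comp (SHom.snd (B.prod C) (B.prod C)))) (diagCon C) := by
    refine genCon_le ?_
    intro p q _
    show (diagCon C).r (p.2, p.2) (q.2, q.2)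
    exact genCon_r_gen (top_r p.2 q.2)
  have key : ∀ Wp Wq : ((B.prod C).prod (B.prod C)).carrier, (genCon (diagHom (B.prod C)) (kerCon (SHom.fst B C))).r Wp Wq → Wp.1 = Wq.1 → Wp = Wq := by
    intro Wp Wq hΔ hfst
    have hBB : ((Wp.1.1, Wp.2.1) : B.carrier × B.carrier) = (Wq.1.1, Wq.2.1) :=
      SCon.le_iff.mp bound1 _ _ hΔ
    have hCC : (diagCon C).r (Wp.1.2, Wp.2.2) (Wq.1.2, Wq.2.2) :=
      SCon.le_iff.mp bound2 _ _ hΔ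
    have e1 : Wp.2.1 = Wq.2.1 := congrArg Prod.snd hBB
    have hfst2 : Wp.1.2 = Wq.1.2 := congrArg Prod.snd hfst
    rw [← hfst2] at hCC
    have e2 : Wp.2.2 = Wq.2.2 := diagCon_graph habC hmodCC hCC
    exact Prod.ext hfst (Prod.ext e1 e2)
  have hsmall : (genCon (diagHom (B.prod C)) (kerCon (SHom.fst B C))) ⊓ (kerCon (SHom.fst (B.prod C) (B.prod C))) ≤ (kerCon (SHom.fst (B.prod C) (B.prod C)) ⊓ SCon.comap (SHom.snd (B.prod C) (B.prod C)) δ) := by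
    intro Wp Wq hW
    have h1 := inf_r_iff.mp hW
    have heq : Wp = Wq := key Wp Wq h1.1 h1.2
    rw [heq]; exact (kerCon (SHom.fst (B.prod C) (B.prod C)) ⊓ SCon.comap (SHom.snd (B.prod C) (B.prod C)) δ).iseqv.refl Wq
  intro n m t a b u v hab huv hp
  have e_fst : ∀ (X Y : Fin (n+m) → (B.prod C).carrier),
      (t.eval ((B.prod C).prod (B.prod C)) (fun k => (X k, Y k))).1 = t.eval (B.prod C) X := by
    intro X Y; exact fst_eval t _
  have e_snd : ∀ (X Y : Fin (n+m) → (B.prod C).carrier),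
      (t.eval ((B.prod C).prod (B.prod C)) (fun k => (X k, Y k))).2 = t.eval (B.prod C) Y := by
    intro X Y; exact snd_eval t _
  have hPQ : (genCon (diagHom (B.prod C)) (kerCon (SHom.fst B C))).r (t.eval ((B.prod C).prod (B.prod C)) (fun k => (Fin.append a u k, Fin.append a v k)))
      (t.eval ((B.prod C).prod (B.prod C)) (fun k => (Fin.append b u k, Fin.append b v k))) := by
    refine genCon_r_step t ?_
    intro k
    refine Fin.addCases (motive := fun k =>
      ((Fin.append a u k, Fin.append a v k) : ((B.prod C).prod (B.prod C)).carrier) = (Fin.append b u k, Fin.append b v k) ∨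
      ∃ p q, (kerCon (SHom.fst B C)).r p q ∧
        ((Fin.append a u k, Fin.append a v k) : ((B.prod C).prod (B.prod C)).carrier) = (diagHom (B.prod C)).toFun p ∧
        ((Fin.append b u k, Fin.append b v k) : ((B.prod C).prod (B.prod C)).carrier) = (diagHom (B.prod C)).toFun q)
      (fun i => ?_) (fun j => ?_) k
    · simp only [Fin.append_left]
      exact Or.inr ⟨a i, b i, hab i, rfl, rfl⟩
    · exact Or.inl (by simp only [Fin.append_right])
  have hPQ0 : (genCon (diagHom (B.prod C)) (kerCon (SHom.fst B C))).r (t.eval ((B.prod C).prod (B.prod C)) (fun k => (Fin.append a u k, Fin.append a u k)))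
      (t.eval ((B.prod C).prod (B.prod C)) (fun k => (Fin.append b u k, Fin.append b u k))) := by
    refine genCon_r_step t ?_
    intro k
    refine Fin.addCases (motive := fun k =>
      ((Fin.append a u k, Fin.append a u k) : ((B.prod C).prod (B.prod C)).carrier) = (Fin.append b u k, Fin.append b u k) ∨
      ∃ p q, (kerCon (SHom.fst B C)).r p q ∧
        ((Fin.append a u k, Fin.append a u k) : ((B.prod C).prod (B.prod C)).carrier) = (diagHom (B.prod C)).toFun p ∧
        ((Fin.append b u k, Fin.append b u k) : ((B.prod C).prod (B.prod C)).carrier) = (diagHom (B.prod C)).toFun q)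
      (fun i => ?_) (fun j => ?_) k
    · simp only [Fin.append_left]
      exact Or.inr ⟨a i, b i, hab i, rfl, rfl⟩
    · exact Or.inl (by simp only [Fin.append_right])
  have hPP0 : (kerCon (SHom.fst (B.prod C) (B.prod C)) ⊓ SCon.comap (SHom.snd (B.prod C) (B.prod C)) δ).r (t.eval ((B.prod C).prod (B.prod C)) (fun k => (Fin.append a u k, Fin.append a v k)))
      (t.eval ((B.prod C).prod (B.prod C)) (fun k => (Fin.append a u k, Fin.append a u k))) := by
    refine inf_r_iff.mpr ⟨?_, ?_⟩
    · show (t.eval ((B.prod C).prod (B.prod C)) _).1 = (t.eval ((B.prod C).prod (B.prod C)) _).1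
      rw [e_fst, e_fst]
    · show δ.r (t.eval ((B.prod C).prod (B.prod C)) _).2 (t.eval ((B.prod C).prod (B.prod C)) _).2
      rw [e_snd, e_snd]
      exact δ.iseqv.symm hp
  have hQQ0 : ((kerCon (SHom.fst (B.prod C) (B.prod C))) ⊓ ((genCon (diagHom (B.prod C)) (kerCon (SHom.fst B C))) ⊔ (kerCon (SHom.fst (B.prod C) (B.prod C)) ⊓ SCon.comap (SHom.snd (B.prod C) (B.prod C)) δ))).r
      (t.eval ((B.prod C).prod (B.prod C)) (fun k => (Fin.append b u k, Fin.append b v k)))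
      (t.eval ((B.prod C).prod (B.prod C)) (fun k => (Fin.append b u k, Fin.append b u k))) := by
    refine inf_r_iff.mpr ⟨?_, ?_⟩
    · show (t.eval ((B.prod C).prod (B.prod C)) _).1 = (t.eval ((B.prod C).prod (B.prod C)) _).1
      rw [e_fst, e_fst]
    · have s1 : ((genCon (diagHom (B.prod C)) (kerCon (SHom.fst B C))) ⊔ (kerCon (SHom.fst (B.prod C) (B.prod C)) ⊓ SCon.comap (SHom.snd (B.prod C) (B.prod C)) δ)).r _ _ := r_sup_of_r_left ((genCon (diagHom (B.prod C)) (kerCon (SHom.fst B C))).iseqv.symm hPQ)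
      have s2 : ((genCon (diagHom (B.prod C)) (kerCon (SHom.fst B C))) ⊔ (kerCon (SHom.fst (B.prod C) (B.prod C)) ⊓ SCon.comap (SHom.snd (B.prod C) (B.prod C)) δ)).r _ _ := r_sup_of_r_right hPP0
      have s3 : ((genCon (diagHom (B.prod C)) (kerCon (SHom.fst B C))) ⊔ (kerCon (SHom.fst (B.prod C) (B.prod C)) ⊓ SCon.comap (SHom.snd (B.prod C) (B.prod C)) δ)).r _ _ := r_sup_of_r_left hPQ0
      exact ((genCon (diagHom (B.prod C)) (kerCon (SHom.fst B C))) ⊔ (kerCon (SHom.fst (B.prod C) (B.prod C)) ⊓ SCon.comap (SHom.snd (B.prod C) (B.prod C)) δ)).iseqv.trans (((genCon (diagHom (B.prod C)) (kerCon (SHom.fst B C))) ⊔ (kerCon (SHom.fst (B.prod C) (B.prod C)) ⊓ SCon.comap (SHom.snd (B.prod C) (B.prod C)) δ)).iseqv.trans s1 s2) s3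
  have hmodeq : (kerCon (SHom.fst (B.prod C) (B.prod C))) ⊓ ((genCon (diagHom (B.prod C)) (kerCon (SHom.fst B C))) ⊔ (kerCon (SHom.fst (B.prod C) (B.prod C)) ⊓ SCon.comap (SHom.snd (B.prod C) (B.prod C)) δ)) = (kerCon (SHom.fst (B.prod C) (B.prod C)) ⊓ SCon.comap (SHom.snd (B.prod C) (B.prod C)) δ) := by
    rw [inf_comm, sup_comm]
    rw [sup_inf_assoc_of_le (y := (genCon (diagHom (B.prod C)) (kerCon (SHom.fst B C)))) (inf_le_left : (kerCon (SHom.fst (B.prod C) (B.prod C)) ⊓ SCon.comap (SHom.snd (B.prod C) (B.prod C)) δ) ≤ (kerCon (SHom.fst (B.prod C) (B.prod C))))]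
    exact sup_eq_left.mpr (le_trans hsmall (le_refl (kerCon (SHom.fst (B.prod C) (B.prod C)) ⊓ SCon.comap (SHom.snd (B.prod C) (B.prod C)) δ)))
  rw [hmodeq] at hQQ0
  have hfin := (inf_r_iff.mp hQQ0).2
  show δ.r (t.eval (B.prod C) (Fin.append b u)) (t.eval (B.prod C) (Fin.append b v))
  have c1 : δ.r (t.eval ((B.prod C).prod (B.prod C)) (fun k => (Fin.append b u k, Fin.append b v k))).2
      (t.eval ((B.prod C).prod (B.prod C)) (fun k => (Fin.append b u k, Fin.append b u k))).2 := hfin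
  rw [e_snd, e_snd] at c1
  exact δ.iseqv.symm c1

end WeaponOne

section WeaponTwo

variable {S : Signature} {B C : SAlgebra S}

/-- η₁ strongly centralizes everything also in the second argument of the term condition. -/
lemma weapon_two
    (habC : Centralizes C ⊤ ⊤ ⊥)
    (hmodCC : IsModularLattice (SCon (C.prod C)))
    (hmodT : IsModularLattice (SCon (B.prod (C.prod C))))
    (δ : SCon (B.prod C)) :
    Centralizes (B.prod C) ⊤ (kerCon (SHom.fst B C)) δ := by
  haveI := hmodT
  let eT : SHom (B.prod C) (B.prod (C.prod C)) :=
    SHom.pair (SHom.fst B C) (SHom.pair (SHom.snd B C) (SHom.snd B C))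
  let π1T : SHom (B.prod (C.prod C)) (B.prod C) :=
    SHom.pair (SHom.fst B (C.prod C)) ((SHom.fst C C).comp (SHom.snd B (C.prod C)))
  let π2T : SHom (B.prod (C.prod C)) (B.prod C) :=
    SHom.pair (SHom.fst B (C.prod C)) ((SHom.snd C C).comp (SHom.snd B (C.prod C)))
  have bound : genCon eT (⊤ : SCon (B.prod C)) ≤
      SCon.comap (SHom.snd B (C.prod C)) (diagCon C) := by
    refine genCon_le ?_
    intro p q _
    show (diagCon C).r (p.2, p.2) (q.2, q.2)
    exact genCon_r_gen (top_r p.2 q.2)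
  have key : ∀ Z Z' : (B.prod (C.prod C)).carrier,
      (genCon eT (⊤ : SCon (B.prod C))).r Z Z' → π1T.toFun Z = π1T.toFun Z' → Z = Z' := by
    intro Z Z' hΔ hfst
    have e1' := congrArg Prod.fst hfst
    have e21' := congrArg Prod.snd hfst
    have e1 : Z.1 = Z'.1 := e1'
    have e21 : Z.2.1 = Z'.2.1 := e21'
    have hCC : (diagCon C).r (Z.2.1, Z.2.2) (Z'.2.1, Z'.2.2) := by
      have h0 := SCon.le_iff.mp bound _ _ hΔ
      have : (SHom.snd B (C.prod C)).toFun Z = (Z.2.1, Z.2.2) := Prod.mk.eta.symm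
      rw [comap_r] at h0
      rwa [show (SHom.snd B (C.prod C)).toFun Z = (Z.2.1, Z.2.2) from Prod.mk.eta.symm,
        show (SHom.snd B (C.prod C)).toFun Z' = (Z'.2.1, Z'.2.2) from Prod.mk.eta.symm] at h0
    rw [← e21] at hCC
    have e22 : Z.2.2 = Z'.2.2 := diagCon_graph habC hmodCC hCC
    exact Prod.ext e1 (Prod.ext e21 e22)
  have hsmall : genCon eT (⊤ : SCon (B.prod C)) ⊓ kerCon π1T ≤
      kerCon π1T ⊓ SCon.comap π2T δ := by
    intro Z Z' hW
    have h1 := inf_r_iff.mp hW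
    have heq : Z = Z' := key Z Z' h1.1 h1.2
    rw [heq]
    exact (kerCon π1T ⊓ SCon.comap π2T δ).iseqv.refl Z'
  intro n m t a b u v _ huv hp
  let hatu : Fin m → (B.prod (C.prod C)).carrier := fun j => ((u j).1, ((u j).2, (v j).2))
  have hπ1u : ∀ j, π1T.toFun (hatu j) = u j := fun j => Prod.mk.eta
  have hπ2u : ∀ j, π2T.toFun (hatu j) = v j := fun j => by
    show ((u j).1, (v j).2) = v j
    rw [show (u j).1 = (v j).1 from huv j]
    exact Prod.mk.eta
  have hπ1e : ∀ d : (B.prod C).carrier, π1T.toFun (eT.toFun d) = d := fun d => Prod.mk.eta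
  have hπ2e : ∀ d : (B.prod C).carrier, π2T.toFun (eT.toFun d) = d := fun d => Prod.mk.eta
  have keyEval : ∀ (g : SHom (B.prod (C.prod C)) (B.prod C))
      (Z : Fin (n+m) → (B.prod (C.prod C)).carrier),
      g.toFun (t.eval _ Z) = t.eval (B.prod C) (fun k => g.toFun (Z k)) :=
    fun g Z => hom_eval g t Z
  -- the four tuple assignments
  have compPi : ∀ (g : SHom (B.prod (C.prod C)) (B.prod C))
      (x : Fin n → (B.prod C).carrier) (w : Fin m → (B.prod (C.prod C)).carrier)
      (x' : Fin n → (B.prod C).carrier) (w' : Fin m → (B.prod C).carrier),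
      (∀ i, g.toFun (eT.toFun (x i)) = x' i) → (∀ j, g.toFun (w j) = w' j) →
      (fun k => g.toFun (Fin.append (fun i => eT.toFun (x i)) w k)) = Fin.append x' w' := by
    intro g x w x' w' hx hw
    funext k
    refine Fin.addCases (motive := fun k =>
      g.toFun (Fin.append (fun i => eT.toFun (x i)) w k) = Fin.append x' w' k)
      (fun i => ?_) (fun j => ?_) k
    · simp only [Fin.append_left]; exact hx i
    · simp only [Fin.append_right]; exact hw j
  have hPQ : (genCon eT (⊤ : SCon (B.prod C))).r
      (t.eval _ (Fin.append (fun i => eT.toFun (a i)) hatu))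
      (t.eval _ (Fin.append (fun i => eT.toFun (b i)) hatu)) := by
    refine genCon_r_step t ?_
    intro k
    refine Fin.addCases (motive := fun k =>
      Fin.append (fun i => eT.toFun (a i)) hatu k = Fin.append (fun i => eT.toFun (b i)) hatu k ∨
      ∃ p q, (⊤ : SCon (B.prod C)).r p q ∧
        Fin.append (fun i => eT.toFun (a i)) hatu k = eT.toFun p ∧
        Fin.append (fun i => eT.toFun (b i)) hatu k = eT.toFun q)
      (fun i => ?_) (fun j => ?_) k
    · refine Or.inr ⟨a i, b i, top_r _ _, ?_, ?_⟩
      · simp only [Fin.append_left]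
      · simp only [Fin.append_left]
    · exact Or.inl (by simp only [Fin.append_right])
  have hPQ0 : (genCon eT (⊤ : SCon (B.prod C))).r
      (t.eval _ (Fin.append (fun i => eT.toFun (a i)) (fun j => eT.toFun (u j))))
      (t.eval _ (Fin.append (fun i => eT.toFun (b i)) (fun j => eT.toFun (u j)))) := by
    refine genCon_r_step t ?_
    intro k
    refine Fin.addCases (motive := fun k =>
      Fin.append (fun i => eT.toFun (a i)) (fun j => eT.toFun (u j)) k =
        Fin.append (fun i => eT.toFun (b i)) (fun j => eT.toFun (u j)) k ∨
      ∃ p q, (⊤ : SCon (B.prod C)).r p q ∧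
        Fin.append (fun i => eT.toFun (a i)) (fun j => eT.toFun (u j)) k = eT.toFun p ∧
        Fin.append (fun i => eT.toFun (b i)) (fun j => eT.toFun (u j)) k = eT.toFun q)
      (fun i => ?_) (fun j => ?_) k
    · refine Or.inr ⟨a i, b i, top_r _ _, ?_, ?_⟩
      · simp only [Fin.append_left]
      · simp only [Fin.append_left]
    · exact Or.inl (by simp only [Fin.append_right])
  have hPP0 : (kerCon π1T ⊓ SCon.comap π2T δ).r
      (t.eval _ (Fin.append (fun i => eT.toFun (a i)) hatu))
      (t.eval _ (Fin.append (fun i => eT.toFun (a i)) (fun j => eT.toFun (u j)))) := by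
    refine inf_r_iff.mpr ⟨?_, ?_⟩
    · show π1T.toFun _ = π1T.toFun _
      rw [keyEval, keyEval, compPi π1T a hatu a u (fun i => hπ1e (a i)) hπ1u,
        compPi π1T a (fun j => eT.toFun (u j)) a u (fun i => hπ1e (a i)) (fun j => hπ1e (u j))]
    · show δ.r (π2T.toFun _) (π2T.toFun _)
      rw [keyEval, keyEval, compPi π2T a hatu a v (fun i => hπ2e (a i)) hπ2u,
        compPi π2T a (fun j => eT.toFun (u j)) a u (fun i => hπ2e (a i)) (fun j => hπ2e (u j))]
      exact δ.iseqv.symm hp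
  have hQQ0 : (kerCon π1T ⊓ ((genCon eT (⊤ : SCon (B.prod C))) ⊔
      (kerCon π1T ⊓ SCon.comap π2T δ))).r
      (t.eval _ (Fin.append (fun i => eT.toFun (b i)) hatu))
      (t.eval _ (Fin.append (fun i => eT.toFun (b i)) (fun j => eT.toFun (u j)))) := by
    refine inf_r_iff.mpr ⟨?_, ?_⟩
    · show π1T.toFun _ = π1T.toFun _
      rw [keyEval, keyEval, compPi π1T b hatu b u (fun i => hπ1e (b i)) hπ1u,
        compPi π1T b (fun j => eT.toFun (u j)) b u (fun i => hπ1e (b i)) (fun j => hπ1e (u j))]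
    · have s1 := r_sup_of_r_left (c := genCon eT (⊤ : SCon (B.prod C)))
        (d := kerCon π1T ⊓ SCon.comap π2T δ)
        ((genCon eT (⊤ : SCon (B.prod C))).iseqv.symm hPQ)
      have s2 := r_sup_of_r_right (c := genCon eT (⊤ : SCon (B.prod C)))
        (d := kerCon π1T ⊓ SCon.comap π2T δ) hPP0
      have s3 := r_sup_of_r_left (c := genCon eT (⊤ : SCon (B.prod C)))
        (d := kerCon π1T ⊓ SCon.comap π2T δ) hPQ0
      exact ((genCon eT (⊤ : SCon (B.prod C))) ⊔ _).iseqv.trans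
        (((genCon eT (⊤ : SCon (B.prod C))) ⊔ _).iseqv.trans s1 s2) s3
  have hmodeq : kerCon π1T ⊓ ((genCon eT (⊤ : SCon (B.prod C))) ⊔
      (kerCon π1T ⊓ SCon.comap π2T δ)) = kerCon π1T ⊓ SCon.comap π2T δ := by
    rw [inf_comm, sup_comm]
    rw [sup_inf_assoc_of_le (y := genCon eT (⊤ : SCon (B.prod C)))
      (inf_le_left : kerCon π1T ⊓ SCon.comap π2T δ ≤ kerCon π1T)]
    exact sup_eq_left.mpr hsmall
  rw [hmodeq] at hQQ0
  have hfin := (inf_r_iff.mp hQQ0).2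
  have c1 : δ.r (π2T.toFun (t.eval _ (Fin.append (fun i => eT.toFun (b i)) hatu)))
      (π2T.toFun (t.eval _ (Fin.append (fun i => eT.toFun (b i)) (fun j => eT.toFun (u j))))) := hfin
  rw [keyEval, keyEval, compPi π2T b hatu b v (fun i => hπ2e (b i)) hπ2u,
    compPi π2T b (fun j => eT.toFun (u j)) b u (fun i => hπ2e (b i)) (fun j => hπ2e (u j))] at c1
  exact δ.iseqv.symm c1

end WeaponTwo

section ZornCenter

variable {S : Signature} {A : SAlgebra S}

lemma chain_finite_bound {c : Set (SCon A)} (hc : IsChain (· ≤ ·) c) {θ₀ : SCon A} (h₀ : θ₀ ∈ c)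
    {n : ℕ} (g : Fin n → A.carrier × A.carrier)
    (hg : ∀ i, ∃ θ ∈ c, θ.r (g i).1 (g i).2) :
    ∃ θ ∈ c, ∀ i, θ.r (g i).1 (g i).2 := by
  induction n with
  | zero => exact ⟨θ₀, h₀, fun i => i.elim0⟩
  | succ n ih =>
      obtain ⟨θ, hθ, hall⟩ := ih (fun i => g i.castSucc) (fun i => hg i.castSucc)
      obtain ⟨θ', hθ', hlast⟩ := hg (Fin.last n)
      rcases eq_or_ne θ θ' with rfl | hne
      · refine ⟨θ, hθ, fun i => ?_⟩
        refine Fin.lastCases ?_ (fun i => ?_) i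
        · exact hlast
        · exact hall i
      · rcases hc.total hθ hθ' with hle | hle
        · refine ⟨θ', hθ', fun i => ?_⟩
          refine Fin.lastCases ?_ (fun i => ?_) i
          · exact hlast
          · exact SCon.le_iff.mp hle _ _ (hall i)
        · refine ⟨θ, hθ, fun i => ?_⟩
          refine Fin.lastCases ?_ (fun i => ?_) i
          · exact SCon.le_iff.mp hle _ _ hlast
          · exact hall i

/-- union of a nonempty chain of congruences -/
def unionCon {c : Set (SCon A)} (hc : IsChain (· ≤ ·) c) {θ₀ : SCon A} (h₀ : θ₀ ∈ c) : SCon A where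
  r x y := ∃ θ ∈ c, θ.r x y
  iseqv := by
    refine ⟨fun x => ⟨θ₀, h₀, θ₀.iseqv.refl x⟩, ?_, ?_⟩
    · rintro x y ⟨θ, hθ, h⟩; exact ⟨θ, hθ, θ.iseqv.symm h⟩
    · rintro x y z ⟨θ, hθ, h⟩ ⟨θ', hθ', h'⟩
      rcases eq_or_ne θ θ' with rfl | hne
      · exact ⟨θ, hθ, θ.iseqv.trans h h'⟩
      · rcases hc.total hθ hθ' with hle | hle
        · exact ⟨θ', hθ', θ'.iseqv.trans (SCon.le_iff.mp hle _ _ h) h'⟩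
        · exact ⟨θ, hθ, θ.iseqv.trans h (SCon.le_iff.mp hle _ _ h')⟩
  compat o x y h := by
    obtain ⟨θ, hθ, hall⟩ := chain_finite_bound hc h₀ (fun i => (x i, y i)) (fun i => h i)
    exact ⟨θ, hθ, θ.compat o x y hall⟩

lemma le_unionCon {c : Set (SCon A)} (hc : IsChain (· ≤ ·) c) {θ₀ : SCon A} (h₀ : θ₀ ∈ c)
    {θ : SCon A} (hθ : θ ∈ c) : θ ≤ unionCon hc h₀ :=
  fun x y h => ⟨θ, hθ, h⟩

lemma centralizes_bot_top_bot : Centralizes A ⊥ ⊤ ⊥ := by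
  intro n m t a b u v hab _ hp
  have : b = a := funext fun i => (bot_r_iff.mp (hab i)).symm
  rw [this]; exact hp

lemma commutator_bot_top : conCommutator A ⊥ ⊤ = ⊥ :=
  le_antisymm (commutator_le centralizes_bot_top_bot) bot_le

lemma bot_mem_center_set : (⊥ : SCon A) ∈ {θ : SCon A | conCommutator A θ ⊤ = ⊥} :=
  commutator_bot_top

lemma le_center_of_central {θ : SCon A} (h : conCommutator A θ ⊤ = ⊥) : θ ≤ conCenter A :=
  le_sSup h

lemma centralizes_center : Centralizes A (conCenter A) ⊤ ⊥ := by
  refine centralizes_sSup ⟨⊥, bot_mem_center_set⟩ ?_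
  intro θ hθ
  exact centralizes_of_commutator_eq_bot hθ

lemma commutator_center_top : conCommutator A (conCenter A) ⊤ = ⊥ :=
  le_antisymm (commutator_le centralizes_center) bot_le

end ZornCenter

section AssemblyLemmas

variable {S : Signature}

/-- transport a Θ-pair along η₂ when Θ ≤ η₁ (shifting-lemma style) -/
lemma theta_transport {B C : SAlgebra S} {Θ : SCon (B.prod C)}
    (hmodD : IsModularLattice (SCon (B.prod C)))
    (hΘη1 : Θ ≤ kerCon (SHom.fst B C))
    (β1 : B.carrier) {z z' : (B.prod C).carrier} (hzz : Θ.r z z') :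
    Θ.r (β1, z.2) (β1, z'.2) := by
  haveI := hmodD
  have h1 : (kerCon (SHom.fst B C) ⊓ (Θ ⊔ kerCon (SHom.snd B C))).r (β1, z.2) (β1, z'.2) := by
    refine inf_r_iff.mpr ⟨rfl, ?_⟩
    have s1 : (Θ ⊔ kerCon (SHom.snd B C)).r (β1, z.2) z := r_sup_of_r_right rfl
    have s2 := r_sup_of_r_left (c := Θ) (d := kerCon (SHom.snd B C)) hzz
    have s3 : (Θ ⊔ kerCon (SHom.snd B C)).r z' (β1, z'.2) := r_sup_of_r_right rfl
    exact (Θ ⊔ kerCon (SHom.snd B C)).iseqv.trans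
      ((Θ ⊔ kerCon (SHom.snd B C)).iseqv.trans s1 s2) s3
  have hmodeq : kerCon (SHom.fst B C) ⊓ (Θ ⊔ kerCon (SHom.snd B C)) = Θ := by
    rw [inf_comm, sup_inf_assoc_of_le (y := kerCon (SHom.snd B C)) hΘη1]
    refine sup_eq_left.mpr ?_
    intro w w' hw
    have h2 := inf_r_iff.mp hw
    have hww : w = w' := Prod.ext h2.2 h2.1
    rw [hww]; exact Θ.iseqv.refl w'
  rwa [hmodeq] at h1

/-- the kernel of the retraction meets the abelian-over-B part trivially -/
lemma tau_kill {A B C : SAlgebra S} (q1 : SHom A B) (q2 : SHom A C)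
    (p : SHom (B.prod C) A)
    (hret : ∀ a, p.toFun ((SHom.pair q1 q2).toFun a) = a)
    (hq1surj : Function.Surjective q1.toFun)
    (hmodD : IsModularLattice (SCon (B.prod C)))
    (νB : SCon B)
    (hf1 : ∀ x y : A.carrier,
      (SCon.comap (SHom.pair q1 q2) (kerCon p ⊔ kerCon (SHom.fst B C))).r x y →
      q1.toFun x = q1.toFun y)
    {d d' : (B.prod C).carrier} (hΘ : (kerCon p).r d d') (hν : νB.r d.1 d'.1)
    (hsnd : d.2 = d'.2) : d = d' := by
  haveI := hmodD
  have hτ : (kerCon p ⊓ (SCon.comap (SHom.fst B C) νB ⊓ kerCon (SHom.snd B C))).r d d' :=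
    inf_r_iff.mpr ⟨hΘ, inf_r_iff.mpr ⟨hν, hsnd⟩⟩
  have htrans : ∀ c0 : C.carrier,
      (kerCon p ⊓ (SCon.comap (SHom.fst B C) νB ⊓ kerCon (SHom.snd B C))).r
        (d.1, c0) (d'.1, c0) := by
    intro c0
    have h1 : ((SCon.comap (SHom.fst B C) νB ⊓ kerCon (SHom.snd B C)) ⊓
        (kerCon (SHom.fst B C) ⊔ (kerCon p ⊓ (SCon.comap (SHom.fst B C) νB ⊓
          kerCon (SHom.snd B C))))).r (d.1, c0) (d'.1, c0) := by
      refine inf_r_iff.mpr ⟨inf_r_iff.mpr ⟨hν, rfl⟩, ?_⟩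
      have s1 : (kerCon (SHom.fst B C) ⊔ (kerCon p ⊓ (SCon.comap (SHom.fst B C) νB ⊓
          kerCon (SHom.snd B C)))).r (d.1, c0) d := r_sup_of_r_left rfl
      have s2 := r_sup_of_r_right (c := kerCon (SHom.fst B C)) hτ
      have s3 : (kerCon (SHom.fst B C) ⊔ (kerCon p ⊓ (SCon.comap (SHom.fst B C) νB ⊓
          kerCon (SHom.snd B C)))).r d' (d'.1, c0) := r_sup_of_r_left rfl
      exact (kerCon (SHom.fst B C) ⊔ _).iseqv.trans
        ((kerCon (SHom.fst B C) ⊔ _).iseqv.trans s1 s2) s3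
    have hmodeq : (SCon.comap (SHom.fst B C) νB ⊓ kerCon (SHom.snd B C)) ⊓
        (kerCon (SHom.fst B C) ⊔ (kerCon p ⊓ (SCon.comap (SHom.fst B C) νB ⊓
          kerCon (SHom.snd B C)))) =
        kerCon p ⊓ (SCon.comap (SHom.fst B C) νB ⊓ kerCon (SHom.snd B C)) := by
      rw [inf_comm, sup_comm,
        sup_inf_assoc_of_le (y := kerCon (SHom.fst B C)) (inf_le_right :
          kerCon p ⊓ (SCon.comap (SHom.fst B C) νB ⊓ kerCon (SHom.snd B C)) ≤
          SCon.comap (SHom.fst B C) νB ⊓ kerCon (SHom.snd B C))]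
      refine sup_eq_left.mpr ?_
      intro w w' hw
      have h2 := inf_r_iff.mp hw
      have h3 := inf_r_iff.mp h2.2
      have hww : w = w' := Prod.ext h2.1 h3.2
      rw [hww]
      exact (kerCon p ⊓ (SCon.comap (SHom.fst B C) νB ⊓ kerCon (SHom.snd B C))).iseqv.refl w'
    rwa [hmodeq] at h1
  obtain ⟨a0, ha0⟩ := hq1surj d.1
  obtain ⟨b1, hb1⟩ := hq1surj d'.1
  have h2 := htrans (q2.toFun b1)
  have heb1 : (SHom.pair q1 q2).toFun b1 = (d'.1, q2.toFun b1) := by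
    show (q1.toFun b1, q2.toFun b1) = _
    rw [hb1]
  have hea0 : (SHom.pair q1 q2).toFun a0 = (d.1, q2.toFun a0) := by
    show (q1.toFun a0, q2.toFun a0) = _
    rw [ha0]
  have hab2 : (SCon.comap (SHom.pair q1 q2) (kerCon p ⊔ kerCon (SHom.fst B C))).r a0
      (p.toFun (d.1, q2.toFun b1)) := by
    show (kerCon p ⊔ kerCon (SHom.fst B C)).r _ _
    rw [hea0]
    have t1 : (kerCon p ⊔ kerCon (SHom.fst B C)).r (d.1, q2.toFun a0) (d.1, q2.toFun b1) :=
      r_sup_of_r_right rfl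
    have t2 : (kerCon p ⊔ kerCon (SHom.fst B C)).r (d.1, q2.toFun b1)
        ((SHom.pair q1 q2).toFun (p.toFun (d.1, q2.toFun b1))) := by
      refine r_sup_of_r_left ?_
      show p.toFun _ = p.toFun _
      rw [hret]
    exact (kerCon p ⊔ kerCon (SHom.fst B C)).iseqv.trans t1 t2
  have hq1eq : q1.toFun a0 = q1.toFun (p.toFun (d.1, q2.toFun b1)) := hf1 _ _ hab2
  have hpd : p.toFun (d.1, q2.toFun b1) = b1 := by
    have h3 := (inf_r_iff.mp h2).1
    have h4 : p.toFun (d.1, q2.toFun b1) = p.toFun (d'.1, q2.toFun b1) := h3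
    rw [h4, ← heb1, hret]
  have : d.1 = d'.1 := by
    rw [← ha0, ← hb1, hq1eq, hpd]
  exact Prod.ext this hsnd

/-- if the kernel congruence centralizes everything and B is centerless,
the kernel is below η₁ -/
lemma theta_le_eta1 {B C : SAlgebra S} (Θ : SCon (B.prod C))
    (hΘc : Centralizes (B.prod C) Θ ⊤ ⊥)
    (pick : B.carrier → C.carrier)
    (hcenterB : conCenter B = ⊥) :
    Θ ≤ kerCon (SHom.fst B C) := by
  classical
  set R : B.carrier → B.carrier → Prop :=
    fun x y => ∃ cc cc', Θ.r (x, cc) (y, cc') with hR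
  have hRrefl : ∀ x, R x x := fun x => ⟨pick x, pick x, Θ.iseqv.refl _⟩
  have hRsymm : ∀ {x y}, R x y → R y x := by
    rintro x y ⟨cc, cc', h⟩; exact ⟨cc', cc, Θ.iseqv.symm h⟩
  have hRcompat : ∀ (o : S.ops) (xx : Fin (S.arity o) → B.carrier) (i : Fin (S.arity o))
      (x y : B.carrier), R x y →
      R (B.interp o (Function.update xx i x)) (B.interp o (Function.update xx i y)) := by
    rintro o xx i x y ⟨cc, cc', hxy⟩
    have hcomp := Θ.compat o
      (fun j => if j = i then (x, cc) else (xx j, pick (xx j)))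
      (fun j => if j = i then (y, cc') else (xx j, pick (xx j)))
      (fun j => by
        show Θ.r (if j = i then (x, cc) else (xx j, pick (xx j)))
          (if j = i then (y, cc') else (xx j, pick (xx j)))
        by_cases hj : j = i
        · exact (congrArg₂ Θ.r (if_pos hj) (if_pos hj)).mpr hxy
        · exact (congrArg₂ Θ.r (if_neg hj) (if_neg hj)).mpr (Θ.iseqv.refl _))
    refine ⟨((B.prod C).interp o (fun j => if j = i then (x, cc) else (xx j, pick (xx j)))).2,
      ((B.prod C).interp o (fun j => if j = i then (y, cc') else (xx j, pick (xx j)))).2,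
      ?_⟩
    have e1 : (fun j => ((if j = i then ((x, cc) : (B.prod C).carrier)
        else (xx j, pick (xx j))) : (B.prod C).carrier).1) = Function.update xx i x := by
      funext j
      by_cases hj : j = i
      · subst hj; exact (congrArg Prod.fst (if_pos rfl)).trans (Function.update_self j x xx).symm
      · exact (congrArg Prod.fst (if_neg hj)).trans (Function.update_of_ne hj _ _).symm
    have e2 : (fun j => ((if j = i then ((y, cc') : (B.prod C).carrier)
        else (xx j, pick (xx j))) : (B.prod C).carrier).1) = Function.update xx i y := by
      funext j
      by_cases hj : j = i
      · subst hj; exact (congrArg Prod.fst (if_pos rfl)).trans (Function.update_self j y xx).symm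
      · exact (congrArg Prod.fst (if_neg hj)).trans (Function.update_of_ne hj _ _).symm
    have k1 : (B.interp o (Function.update xx i x),
        ((B.prod C).interp o (fun j => if j = i then (x, cc) else (xx j, pick (xx j)))).2) =
        (B.prod C).interp o (fun j => if j = i then (x, cc) else (xx j, pick (xx j))) := by
      refine Prod.ext ?_ rfl
      show B.interp o (Function.update xx i x) = B.interp o _
      rw [← e1]
    have k2 : (B.interp o (Function.update xx i y),
        ((B.prod C).interp o (fun j => if j = i then (y, cc') else (xx j, pick (xx j)))).2) =
        (B.prod C).interp o (fun j => if j = i then (y, cc') else (xx j, pick (xx j))) := by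
      refine Prod.ext ?_ rfl
      show B.interp o (Function.update xx i y) = B.interp o _
      rw [← e2]
    rw [k1, k2]
    exact hcomp
  set γ : SCon B := chainCon B R hRrefl (fun h => hRsymm h) hRcompat with hγ
  have hγc : Centralizes B γ ⊤ ⊥ := by
    intro n m t a b u v hab huv hp
    refine centralizes_chain_first (R := R) ?_ n m t a b u v (fun i => hab i) huv hp
    rintro c d ⟨cc, cc', hcd⟩ n' m' t' x i u' v' _ hp'
    -- lift everything to B × C
    have hDpre : (⊥ : SCon (B.prod C)).r
        (t'.eval (B.prod C) (Fin.append
          (fun i' => if i' = i then (c, cc) else (x i', pick (x i')))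
          (fun j => ((u' j, pick (u' j)) : (B.prod C).carrier))))
        (t'.eval (B.prod C) (Fin.append
          (fun i' => if i' = i then (c, cc) else (x i', pick (x i')))
          (fun j => ((v' j, pick (u' j)) : (B.prod C).carrier)))) := by
      rw [bot_r_iff]
      refine Prod.ext ?_ ?_
      · rw [fst_eval, fst_eval]
        have efst : ∀ (w : Fin m' → B.carrier) (w2 : Fin m' → C.carrier),
            (fun k => ((Fin.append
              (fun i' => if i' = i then ((c, cc) : (B.prod C).carrier) else (x i', pick (x i')))
              (fun j => ((w j, w2 j) : (B.prod C).carrier)) k).1)) =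
            Fin.append (Function.update x i c) w := by
          intro w w2
          funext k
          refine Fin.addCases (motive := fun k => (Fin.append
            (fun i' => if i' = i then ((c, cc) : (B.prod C).carrier) else (x i', pick (x i')))
            (fun j => ((w j, w2 j) : (B.prod C).carrier)) k).1 =
            Fin.append (Function.update x i c) w k) (fun i' => ?_) (fun j => ?_) k
          · simp only [Fin.append_left]
            by_cases hj : i' = i
            · subst hj; exact (congrArg Prod.fst (if_pos rfl)).trans (Function.update_self i' c x).symm
            · exact (congrArg Prod.fst (if_neg hj)).trans (Function.update_of_ne hj _ _).symm
          · simp only [Fin.append_right]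
        exact (congrArg₂ (fun p q => STerm.eval B t' p = STerm.eval B t' q) (efst u' (fun j => pick (u' j))) (efst v' (fun j => pick (u' j)))).mpr (bot_r_iff.mp hp')
        
        
      · rw [snd_eval, snd_eval]
        refine congrArg _ ?_
        funext k
        refine Fin.addCases (motive := fun k => (Fin.append
          (fun i' => if i' = i then ((c, cc) : (B.prod C).carrier) else (x i', pick (x i')))
          (fun j => ((u' j, pick (u' j)) : (B.prod C).carrier)) k).2 =
          (Fin.append
          (fun i' => if i' = i then ((c, cc) : (B.prod C).carrier) else (x i', pick (x i')))
          (fun j => ((v' j, pick (u' j)) : (B.prod C).carrier)) k).2) (fun i' => ?_) (fun j => ?_) k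
        · simp only [Fin.append_left]
        · simp only [Fin.append_right]
    have hDconc := hΘc n' m' t'
      (fun i' => if i' = i then ((c, cc) : (B.prod C).carrier) else (x i', pick (x i')))
      (fun i' => if i' = i then ((d, cc') : (B.prod C).carrier) else (x i', pick (x i')))
      (fun j => ((u' j, pick (u' j)) : (B.prod C).carrier))
      (fun j => ((v' j, pick (u' j)) : (B.prod C).carrier))
      (fun i' => by
        show Θ.r (if i' = i then ((c, cc) : (B.prod C).carrier) else (x i', pick (x i')))
          (if i' = i then ((d, cc') : (B.prod C).carrier) else (x i', pick (x i')))
        by_cases hj : i' = i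
        · exact (congrArg₂ Θ.r (if_pos hj) (if_pos hj)).mpr hcd
        · exact (congrArg₂ Θ.r (if_neg hj) (if_neg hj)).mpr (Θ.iseqv.refl _))
      (fun j => top_r _ _) hDpre
    have hDeq := bot_r_iff.mp hDconc
    rw [bot_r_iff]
    have efst2 : ∀ (z : B.carrier) (zc : C.carrier) (w : Fin m' → B.carrier),
        (fun k => ((Fin.append
          (fun i' => if i' = i then ((z, zc) : (B.prod C).carrier) else (x i', pick (x i')))
          (fun j => ((w j, pick (u' j)) : (B.prod C).carrier)) k).1)) =
        Fin.append (Function.update x i z) w := by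
      intro z zc w
      funext k
      refine Fin.addCases (motive := fun k => (Fin.append
        (fun i' => if i' = i then ((z, zc) : (B.prod C).carrier) else (x i', pick (x i')))
        (fun j => ((w j, pick (u' j)) : (B.prod C).carrier)) k).1 =
        Fin.append (Function.update x i z) w k) (fun i' => ?_) (fun j => ?_) k
      · simp only [Fin.append_left]
        by_cases hj : i' = i
        · subst hj; exact (congrArg Prod.fst (if_pos rfl)).trans (Function.update_self i' z x).symm
        · exact (congrArg Prod.fst (if_neg hj)).trans (Function.update_of_ne hj _ _).symm
      · simp only [Fin.append_right]
    have h1 := congrArg Prod.fst hDeq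
    exact (congrArg (STerm.eval B t') (efst2 d cc' u')).symm.trans (((fst_eval t' _).symm.trans (h1.trans (fst_eval t' _))).trans (congrArg (STerm.eval B t') (efst2 d cc' v')))
    
  have hγcenter : γ ≤ conCenter B :=
    le_center_of_central (le_antisymm (commutator_le hγc) bot_le)
  intro w w' hww
  have hstep : γ.r w.1 w'.1 := ReflTransGen.single ⟨w.2, w'.2, by
    exact hww⟩
  have hbot : (⊥ : SCon B).r w.1 w'.1 := by
    rw [← hcenterB]
    exact SCon.le_iff.mp hγcenter _ _ hstep
  exact bot_r_iff.mp hbot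

end AssemblyLemmas

section AssemblyLemmas2

variable {S : Signature}

/-- the join of the kernel with η₂ is fully centralizing when Θ ≤ η₁ -/
lemma centralizes_theta_sup_eta2 {B C : SAlgebra S} (Θ : SCon (B.prod C))
    (hmodD : IsModularLattice (SCon (B.prod C)))
    (hΘη1 : Θ ≤ kerCon (SHom.fst B C))
    (hw2 : Centralizes (B.prod C) ⊤ (kerCon (SHom.fst B C)) Θ) :
    Centralizes (B.prod C) ⊤ ⊤ (Θ ⊔ kerCon (SHom.snd B C)) := by
  have hIff : ∀ w w' : (B.prod C).carrier,
      (Θ ⊔ kerCon (SHom.snd B C)).r w w' ↔ Θ.r w (w.1, w'.2) := by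
    intro w w'
    constructor
    · intro h
      have hch := sup_r_iff.mp h
      clear h
      induction hch with
      | refl =>
          have : ((w.1, w.2) : (B.prod C).carrier) = w := Prod.mk.eta
          rw [this]; exact Θ.iseqv.refl w
      | @tail z z' _ hstep ih =>
          rcases hstep with hst | hst
          · exact Θ.iseqv.trans ih (theta_transport hmodD hΘη1 w.1 hst)
          · have hz : z.2 = z'.2 := hst
            rw [← hz]; exact ih
    · intro h
      have s1 : (Θ ⊔ kerCon (SHom.snd B C)).r w (w.1, w'.2) := r_sup_of_r_left h
      have s2 : (Θ ⊔ kerCon (SHom.snd B C)).r (w.1, w'.2) w' := r_sup_of_r_right rfl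
      exact (Θ ⊔ kerCon (SHom.snd B C)).iseqv.trans s1 s2
  intro n m t a b u v _ _ hp
  have hmix : ∀ (x : Fin n → (B.prod C).carrier),
      t.eval (B.prod C) (Fin.append x (fun j => (((u j).1, (v j).2) : (B.prod C).carrier))) =
      ((t.eval (B.prod C) (Fin.append x u)).1, (t.eval (B.prod C) (Fin.append x v)).2) := by
    intro x
    refine Prod.ext ?_ ?_
    · rw [fst_eval, fst_eval]
      refine congrArg _ (funext fun k => ?_)
      refine Fin.addCases (motive := fun k =>
        (Fin.append x (fun j => (((u j).1, (v j).2) : (B.prod C).carrier)) k).1 =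
        (Fin.append x u k).1) (fun i => ?_) (fun j => ?_) k
      · exact (congrArg Prod.fst (Fin.append_left x (fun j => (((u j).1, (v j).2) : (B.prod C).carrier)) i)).trans (congrArg Prod.fst (Fin.append_left x u i)).symm
      · exact (congrArg Prod.fst (Fin.append_right x (fun j => (((u j).1, (v j).2) : (B.prod C).carrier)) j)).trans (congrArg Prod.fst (Fin.append_right x u j)).symm
    · rw [snd_eval, snd_eval]
      refine congrArg _ (funext fun k => ?_)
      refine Fin.addCases (motive := fun k =>
        (Fin.append x (fun j => (((u j).1, (v j).2) : (B.prod C).carrier)) k).2 =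
        (Fin.append x v k).2) (fun i => ?_) (fun j => ?_) k
      · exact (congrArg Prod.snd (Fin.append_left x (fun j => (((u j).1, (v j).2) : (B.prod C).carrier)) i)).trans (congrArg Prod.snd (Fin.append_left x v i)).symm
      · exact (congrArg Prod.snd (Fin.append_right x (fun j => (((u j).1, (v j).2) : (B.prod C).carrier)) j)).trans (congrArg Prod.snd (Fin.append_right x v j)).symm
  have hM := (hIff _ _).mp hp
  rw [← hmix a] at hM
  have hconc := hw2 n m t a b u (fun j => (((u j).1, (v j).2) : (B.prod C).carrier))
    (fun i => top_r _ _) (fun j => rfl) hM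
  refine (hIff _ _).mpr ?_
  rw [← hmix b]
  exact hconc

/-- the quotient by the center is centerless, given (C1) -/
lemma quot_center_centerless {A : SAlgebra S}
    (hmagic : ∀ α : SCon A, conCommutator A α ⊤ = α ⊓ conCommutator A ⊤ ⊤) :
    conCenter (A.quot (conCenter A)) = ⊥ := by
  have hzm : conCenter A ⊓ conCommutator A ⊤ ⊤ = ⊥ := by
    rw [← hmagic (conCenter A)]; exact commutator_center_top
  apply le_antisymm ?_ bot_le
  refine sSup_le ?_
  intro θq hθq
  have hcq : Centralizes (A.quot (conCenter A)) θq ⊤ ⊥ := centralizes_of_commutator_eq_bot hθq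
  have hpull := centralizes_comap_quot hcq
  have h2 : SCon.comap (SHom.quotHom A (conCenter A)) θq ⊓ conCommutator A ⊤ ⊤ ≤ conCenter A := by
    rw [← hmagic]; exact commutator_le hpull
  have h3 : SCon.comap (SHom.quotHom A (conCenter A)) θq ⊓ conCommutator A ⊤ ⊤ = ⊥ := by
    apply le_antisymm ?_ bot_le
    intro x y hxy
    have hx1 := inf_r_iff.mp hxy
    have hz : (conCenter A).r x y := SCon.le_iff.mp h2 x y hxy
    have hb : (conCenter A ⊓ conCommutator A ⊤ ⊤).r x y := inf_r_iff.mpr ⟨hz, hx1.2⟩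
    rw [hzm] at hb; exact hb
  have h4 : conCommutator A (SCon.comap (SHom.quotHom A (conCenter A)) θq) ⊤ = ⊥ := by
    rw [hmagic]; exact h3
  have h5 : SCon.comap (SHom.quotHom A (conCenter A)) θq ≤ conCenter A :=
    le_center_of_central h4
  intro zq zq' hq
  rw [bot_r_iff]
  obtain ⟨z, rfl⟩ := quotHom_surjective A (conCenter A) zq
  obtain ⟨z', rfl⟩ := quotHom_surjective A (conCenter A) zq'
  have hzz : (conCenter A).r z z' := SCon.le_iff.mp h5 z z' hq
  exact (quotHom_r_iff (conCenter A)).mpr hzz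

end AssemblyLemmas2


/-- an auxiliary modular-lattice computation -/
lemma eta1_inf_theta_sup_eta2 {S : Signature} {B C : SAlgebra S} {Θ : SCon (B.prod C)}
    (hmodD : IsModularLattice (SCon (B.prod C)))
    (hΘη1 : Θ ≤ kerCon (SHom.fst B C)) :
    kerCon (SHom.fst B C) ⊓ (Θ ⊔ kerCon (SHom.snd B C)) = Θ := by
  haveI := hmodD
  rw [inf_comm, sup_inf_assoc_of_le (y := kerCon (SHom.snd B C)) hΘη1]
  refine sup_eq_left.mpr ?_
  intro w w' hw
  have h2 := inf_r_iff.mp hw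
  have hww : w = w' := Prod.ext h2.2 h2.1
  rw [hww]; exact Θ.iseqv.refl w'

/-- An absolute retract in a congruence modular variety satisfying (C1) is the product
of a centerless algebra and an abelian algebra; in particular a directly indecomposable
absolute retract is centerless or abelian. -/
theorem AR_product_centerless_abelian {S : Signature}
    (V : SAlgebra S → Prop) (hV : IsCongruenceModularVariety V)
    (hC1 : ∀ B : SAlgebra S, V B → ∀ α β : SCon B,
      α ⊓ conCommutator B β β = conCommutator B (α ⊓ β) β)
    (A : SAlgebra S) (hA : V A) (har : IsAbsoluteRetract V A) :
    (∃ (B C : SAlgebra S) (f : SHom A (B.prod C)), Function.Bijective f.toFun ∧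
        conCenter B = ⊥ ∧ conCommutator C ⊤ ⊤ = ⊥) ∧
    ((∀ (B C : SAlgebra S) (f : SHom A (B.prod C)), Function.Bijective f.toFun →
        Subsingleton B.carrier ∨ Subsingleton C.carrier) →
      conCenter A = ⊥ ∨ conCommutator A ⊤ ⊤ = ⊥) := by
  classical
  obtain ⟨hVar, hMod⟩ := hV
  have magic : ∀ (X : SAlgebra S), V X → ∀ α : SCon X,
      conCommutator X α ⊤ = α ⊓ conCommutator X ⊤ ⊤ := by
    intro X hX α
    have h := hC1 X hX α ⊤
    rw [inf_top_eq] at h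
    exact h.symm
  have hzm : conCenter A ⊓ conCommutator A ⊤ ⊤ = ⊥ := by
    rw [← magic A hA (conCenter A)]; exact commutator_center_top
  obtain ⟨ψ, hψc, hψz, hψmax⟩ :
      ∃ ψ : SCon A, Centralizes A ⊤ ⊤ ψ ∧ ψ ⊓ conCenter A = ⊥ ∧
        ∀ γ : SCon A, (Centralizes A ⊤ ⊤ γ ∧ γ ⊓ conCenter A = ⊥) → ψ ≤ γ → γ = ψ := by
    obtain ⟨m, _, hm2⟩ := zorn_le_nonempty₀
      {γ : SCon A | Centralizes A ⊤ ⊤ γ ∧ γ ⊓ conCenter A = ⊥}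
      (by
        intro c hcP hchain y hy
        refine ⟨unionCon hchain hy, ⟨?_, ?_⟩, fun z hz => le_unionCon hchain hy hz⟩
        · intro n m t a b u v hab huv hp
          obtain ⟨θ, hθ, hθr⟩ := hp
          exact ⟨θ, hθ, (hcP hθ).1 n m t a b u v hab huv hθr⟩
        · apply le_antisymm ?_ bot_le
          intro x y hxy
          have h1 := inf_r_iff.mp hxy
          obtain ⟨θ, hθ, hθr⟩ := h1.1
          have h2 : (θ ⊓ conCenter A).r x y := inf_r_iff.mpr ⟨hθr, h1.2⟩
          rw [(hcP hθ).2] at h2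
          exact h2)
      (conCommutator A ⊤ ⊤) ⟨centralizes_commutator ⊤ ⊤, by rw [inf_comm]; exact hzm⟩
    exact ⟨m, hm2.1.1, hm2.1.2, fun γ hγ hle => le_antisymm (hm2.2 hγ hle) hle⟩
  have hVB : V (A.quot (conCenter A)) := V_quot hVar hA _
  have hVC : V (A.quot ψ) := V_quot hVar hA _
  have hVD : V ((A.quot (conCenter A)).prod (A.quot ψ)) := V_prod hVar hVB hVC
  set Bq := A.quot (conCenter A) with hBq
  set Cq := A.quot ψ with hCq
  set q1 : SHom A Bq := SHom.quotHom A (conCenter A) with hq1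
  set q2 : SHom A Cq := SHom.quotHom A ψ with hq2
  set e : SHom A (Bq.prod Cq) := SHom.pair q1 q2 with he
  have heinj : Function.Injective e.toFun := by
    intro x y h
    have h1 : q1.toFun x = q1.toFun y := congrArg Prod.fst h
    have h2 : q2.toFun x = q2.toFun y := congrArg Prod.snd h
    have hx : (ψ ⊓ conCenter A).r x y :=
      inf_r_iff.mpr ⟨(quotHom_r_iff ψ).mp h2, (quotHom_r_iff (conCenter A)).mp h1⟩
    rw [hψz] at hx
    exact bot_r_iff.mp hx
  obtain ⟨p, hp⟩ := har _ hVD e heinj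
  have habC : Centralizes Cq ⊤ ⊤ ⊥ := centralizes_quot_top hψc
  have hmodCC := hMod _ (V_prod hVar hVC hVC)
  have hmodD := hMod _ hVD
  have hmodD2 := hMod _ (V_prod hVar hVD hVD)
  have hmodT := hMod _ (V_prod hVar hVB (V_prod hVar hVC hVC))
  -- f1 is central
  have hstep1 : Centralizes (Bq.prod Cq) (kerCon p ⊔ kerCon (SHom.fst Bq Cq)) ⊤ (kerCon p) :=
    centralizes_sup centralizes_self_left (weapon_one habC hmodCC hmodD2 (kerCon p))
  have hcomapbot : SCon.comap e (kerCon p) = ⊥ := by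
    apply le_antisymm ?_ bot_le
    intro x y h
    rw [bot_r_iff]
    have h2 : p.toFun (e.toFun x) = p.toFun (e.toFun y) := h
    rwa [hp x, hp y] at h2
  have hf1c : Centralizes A (SCon.comap e (kerCon p ⊔ kerCon (SHom.fst Bq Cq))) ⊤ ⊥ := by
    have hpb := centralizes_pullback e hstep1
    have h2 := centralizes_mono hpb le_rfl
      (show (⊤ : SCon A) ≤ SCon.comap e ⊤ from fun x y _ => top_r _ _)
    rwa [hcomapbot] at h2
  have hf1z : SCon.comap e (kerCon p ⊔ kerCon (SHom.fst Bq Cq)) ≤ conCenter A :=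
    le_center_of_central (le_antisymm (commutator_le hf1c) bot_le)
  have hf1 : ∀ x y, (SCon.comap e (kerCon p ⊔ kerCon (SHom.fst Bq Cq))).r x y →
      q1.toFun x = q1.toFun y :=
    fun x y h => (quotHom_r_iff (conCenter A)).mpr (SCon.le_iff.mp hf1z x y h)
  -- Θ is central
  have hμD : conCommutator (Bq.prod Cq) ⊤ ⊤ ≤
      SCon.comap (SHom.fst Bq Cq) (conCommutator Bq ⊤ ⊤) ⊓ kerCon (SHom.snd Bq Cq) := by
    refine le_inf ?_ ?_
    · refine commutator_le ?_
      have hpb := centralizes_pullback (SHom.fst Bq Cq)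
        (centralizes_commutator (A := Bq) ⊤ ⊤)
      exact centralizes_mono hpb
        (show (⊤ : SCon (Bq.prod Cq)) ≤ SCon.comap (SHom.fst Bq Cq) ⊤ from fun x y _ => top_r _ _)
        (show (⊤ : SCon (Bq.prod Cq)) ≤ SCon.comap (SHom.fst Bq Cq) ⊤ from fun x y _ => top_r _ _)
    · refine commutator_le ?_
      have hpb := centralizes_pullback (SHom.snd Bq Cq) habC
      have h2 := centralizes_mono hpb
        (show (⊤ : SCon (Bq.prod Cq)) ≤ SCon.comap (SHom.snd Bq Cq) ⊤ from fun x y _ => top_r _ _)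
        (show (⊤ : SCon (Bq.prod Cq)) ≤ SCon.comap (SHom.snd Bq Cq) ⊤ from fun x y _ => top_r _ _)
      have heq : SCon.comap (SHom.snd Bq Cq) (⊥ : SCon Cq) = kerCon (SHom.snd Bq Cq) := by
        apply le_antisymm
        · intro x y hh; exact bot_r_iff.mp hh
        · intro x y hh; exact bot_r_iff.mpr hh
      rwa [heq] at h2
  have hτ : ∀ d d', (kerCon p).r d d' →
      (conCommutator Bq ⊤ ⊤).r d.1 d'.1 → d.2 = d'.2 → d = d' :=
    fun d d' h1 h2 h3 =>
      tau_kill q1 q2 p hp (quotHom_surjective A (conCenter A)) hmodD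
        (conCommutator Bq ⊤ ⊤) hf1 h1 h2 h3
  have hΘcomm : conCommutator (Bq.prod Cq) (kerCon p) ⊤ = ⊥ := by
    rw [magic _ hVD (kerCon p)]
    apply le_antisymm ?_ bot_le
    intro d d' h
    have hh := inf_r_iff.mp h
    have hmu := SCon.le_iff.mp hμD _ _ hh.2
    have hmm := inf_r_iff.mp hmu
    rw [bot_r_iff]
    exact hτ d d' hh.1 hmm.1 hmm.2
  have hΘc : Centralizes (Bq.prod Cq) (kerCon p) ⊤ ⊥ :=
    centralizes_of_commutator_eq_bot hΘcomm
  -- Θ ≤ η1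
  have hBcl : conCenter Bq = ⊥ := quot_center_centerless (magic A hA)
  have hΘη1 : kerCon p ≤ kerCon (SHom.fst Bq Cq) :=
    theta_le_eta1 (kerCon p) hΘc (fun x => q2.toFun x.out) hBcl
  -- f2 = ψ
  have hf2z : SCon.comap e (kerCon p ⊔ kerCon (SHom.snd Bq Cq)) ⊓ conCenter A = ⊥ := by
    apply le_antisymm ?_ bot_le
    intro x y h
    have hh := inf_r_iff.mp h
    have hη1 : (kerCon (SHom.fst Bq Cq)).r (e.toFun x) (e.toFun y) :=
      (quotHom_r_iff (conCenter A)).mpr hh.2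
    have hmem : (kerCon (SHom.fst Bq Cq) ⊓
        (kerCon p ⊔ kerCon (SHom.snd Bq Cq))).r (e.toFun x) (e.toFun y) :=
      inf_r_iff.mpr ⟨hη1, hh.1⟩
    rw [eta1_inf_theta_sup_eta2 hmodD hΘη1] at hmem
    rw [bot_r_iff]
    have h2 : p.toFun (e.toFun x) = p.toFun (e.toFun y) := hmem
    rwa [hp x, hp y] at h2
  have hC22 := centralizes_theta_sup_eta2 (kerCon p) hmodD hΘη1
    (weapon_two habC hmodCC hmodT (kerCon p))
  have hf2P : Centralizes A ⊤ ⊤ (SCon.comap e (kerCon p ⊔ kerCon (SHom.snd Bq Cq))) := by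
    have hpb := centralizes_pullback e hC22
    exact centralizes_mono hpb
      (show (⊤ : SCon A) ≤ SCon.comap e ⊤ from fun x y _ => top_r _ _)
      (show (⊤ : SCon A) ≤ SCon.comap e ⊤ from fun x y _ => top_r _ _)
  have hψf2 : ψ ≤ SCon.comap e (kerCon p ⊔ kerCon (SHom.snd Bq Cq)) := by
    intro x y h
    exact r_sup_of_r_right ((quotHom_r_iff ψ).mpr h)
  have hf2ψ : SCon.comap e (kerCon p ⊔ kerCon (SHom.snd Bq Cq)) = ψ :=
    hψmax _ ⟨hf2P, hf2z⟩ hψf2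
  -- surjectivity
  have hesurj : Function.Surjective e.toFun := by
    intro d
    refine ⟨p.toFun d, ?_⟩
    have hcl : (kerCon p).r (e.toFun (p.toFun d)) d := by
      show p.toFun (e.toFun (p.toFun d)) = p.toFun d
      rw [hp]
    have hfst : q1.toFun (p.toFun d) = d.1 := by
      have h1 : (SCon.comap e (kerCon p ⊔ kerCon (SHom.fst Bq Cq))).r (p.toFun d) d.1.out := by
        show (kerCon p ⊔ kerCon (SHom.fst Bq Cq)).r _ _
        have s1 := r_sup_of_r_left (c := kerCon p) (d := kerCon (SHom.fst Bq Cq)) hcl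
        have s2 : (kerCon p ⊔ kerCon (SHom.fst Bq Cq)).r d (e.toFun d.1.out) := by
          refine r_sup_of_r_right ?_
          show d.1 = q1.toFun d.1.out
          rw [quot_out_mk]
        exact (kerCon p ⊔ kerCon (SHom.fst Bq Cq)).iseqv.trans s1 s2
      have h2 := hf1 _ _ h1
      rw [h2, quot_out_mk]
    have hsnd : q2.toFun (p.toFun d) = d.2 := by
      have h1 : (SCon.comap e (kerCon p ⊔ kerCon (SHom.snd Bq Cq))).r (p.toFun d) d.2.out := by
        show (kerCon p ⊔ kerCon (SHom.snd Bq Cq)).r _ _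
        have s1 := r_sup_of_r_left (c := kerCon p) (d := kerCon (SHom.snd Bq Cq)) hcl
        have s2 : (kerCon p ⊔ kerCon (SHom.snd Bq Cq)).r d (e.toFun d.2.out) := by
          refine r_sup_of_r_right ?_
          show d.2 = q2.toFun d.2.out
          rw [quot_out_mk]
        exact (kerCon p ⊔ kerCon (SHom.snd Bq Cq)).iseqv.trans s1 s2
      rw [hf2ψ] at h1
      have h2 : q2.toFun (p.toFun d) = q2.toFun d.2.out := (quotHom_r_iff ψ).mpr h1
      rw [h2, quot_out_mk]
    exact Prod.ext hfst hsnd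
  have hCab : conCommutator Cq ⊤ ⊤ = ⊥ := le_antisymm (commutator_le habC) bot_le
  refine ⟨⟨Bq, Cq, e, ⟨heinj, hesurj⟩, hBcl, hCab⟩, ?_⟩
  intro hind
  rcases hind Bq Cq e ⟨heinj, hesurj⟩ with hB | hC
  · -- B subsingleton: A is abelian
    right
    haveI := hB
    have hginj : Function.Injective ((SHom.snd Bq Cq).comp e).toFun := by
      intro x y h
      have h2 : ψ.r x y := (quotHom_r_iff ψ).mp h
      have h1 : (conCenter A).r x y :=
        (quotHom_r_iff (conCenter A)).mp (Subsingleton.elim _ _)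
      have hx : (ψ ⊓ conCenter A).r x y := inf_r_iff.mpr ⟨h2, h1⟩
      rw [hψz] at hx
      exact bot_r_iff.mp hx
    have hpb := centralizes_pullback ((SHom.snd Bq Cq).comp e) habC
    have h2 := centralizes_mono hpb
      (show (⊤ : SCon A) ≤ SCon.comap ((SHom.snd Bq Cq).comp e) ⊤ from fun x y _ => top_r _ _)
      (show (⊤ : SCon A) ≤ SCon.comap ((SHom.snd Bq Cq).comp e) ⊤ from fun x y _ => top_r _ _)
    have heq : SCon.comap ((SHom.snd Bq Cq).comp e) (⊥ : SCon Cq) = ⊥ := by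
      apply le_antisymm
      · intro x y h
        exact bot_r_iff.mpr (hginj (bot_r_iff.mp h))
      · intro x y h
        rw [bot_r_iff.mp h]
        exact (SCon.comap ((SHom.snd Bq Cq).comp e) (⊥ : SCon Cq)).iseqv.refl _
    rw [heq] at h2
    exact le_antisymm (commutator_le h2) bot_le
  · -- C subsingleton: A is centerless
    left
    haveI := hC
    have hgsurj : Function.Surjective ((SHom.fst Bq Cq).comp e).toFun :=
      fun z => ⟨z.out, quot_out_mk _ z⟩
    have hginj : Function.Injective ((SHom.fst Bq Cq).comp e).toFun := by
      intro x y h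
      have h1 : (conCenter A).r x y := (quotHom_r_iff (conCenter A)).mp h
      have h2 : ψ.r x y := (quotHom_r_iff ψ).mp (Subsingleton.elim _ _)
      have hx : (ψ ⊓ conCenter A).r x y := inf_r_iff.mpr ⟨h2, h1⟩
      rw [hψz] at hx
      exact bot_r_iff.mp hx
    have hbij : Function.Bijective ((SHom.fst Bq Cq).comp e).toFun := ⟨hginj, hgsurj⟩
    apply le_antisymm ?_ bot_le
    refine sSup_le ?_
    intro θ hθ
    have hθc : Centralizes A θ ⊤ ⊥ := centralizes_of_commutator_eq_bot hθ
    have hpb := centralizes_pullback (invHom _ hbij) hθc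
    have h2 := centralizes_mono hpb le_rfl
      (show (⊤ : SCon Bq) ≤ SCon.comap (invHom _ hbij) ⊤ from fun x y _ => top_r _ _)
    have heq : SCon.comap (invHom _ hbij) (⊥ : SCon A) = ⊥ := by
      apply le_antisymm
      · intro x y h
        have h3 := bot_r_iff.mp h
        have h4 := congrArg ((SHom.fst Bq Cq).comp e).toFun h3
        rw [invHom_right, invHom_right] at h4
        exact bot_r_iff.mpr h4
      · intro x y h
        rw [bot_r_iff.mp h]
        exact (SCon.comap (invHom _ hbij) (⊥ : SCon A)).iseqv.refl _
    rw [heq] at h2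
    have hθ' : SCon.comap (invHom _ hbij) θ ≤ conCenter Bq :=
      le_center_of_central (le_antisymm (commutator_le h2) bot_le)
    intro x y hxy
    rw [bot_r_iff]
    have h4 : (SCon.comap (invHom _ hbij) θ).r
        (((SHom.fst Bq Cq).comp e).toFun x) (((SHom.fst Bq Cq).comp e).toFun y) := by
      show θ.r ((invHom _ hbij).toFun (((SHom.fst Bq Cq).comp e).toFun x))
        ((invHom _ hbij).toFun (((SHom.fst Bq Cq).comp e).toFun y))
      rw [invHom_left, invHom_left]
      exact hxy
    have h5 := SCon.le_iff.mp (le_trans hθ' (le_of_eq hBcl)) _ _ h4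
    exact hginj (bot_r_iff.mp h5)
end
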